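/- arXiv:cs/0612051 — 8 statements merged into one kernel-verified Lean document; each statement's English description precedes it below -/
import Mathlib

section
/- For integers 0 ≤ u ≤ m-1 and integer q ≥ 2, A(m,u) > (q/(q-1)) · K_q · q^{mu}, where A(m,u) = ∏_{i=0}^{u-1}(q^m - q^i) and K_q = ∏_{j=1}^{∞}(1 - q^{-j}). -/
noncomputable def Aq (q m u : ℕ) : ℝ := ∏ i ∈ Finset.range u, ((q:ℝ)^m - (q:ℝ)^i)

noncomputable def Kq (q : ℕ) : ℝ := ∏' j : ℕ, (1 - ((q:ℝ))⁻¹ ^ (j+1))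

noncomputable def gaussBinom (q n t : ℕ) : ℝ := Aq q n t / Aq q t t

section aux

variable {q : ℕ}

private lemma neg_log_le (hq : 2 ≤ q) (j : ℕ) :
    -Real.log (1 - ((q:ℝ))⁻¹ ^ (j+1)) ≤ 2 * ((q:ℝ))⁻¹ ^ (j+1) := by
  have hq2 : (2:ℝ) ≤ (q:ℝ) := by exact_mod_cast hq
  have hr0 : (0:ℝ) < ((q:ℝ))⁻¹ := by positivity
  have hr2 : ((q:ℝ))⁻¹ ≤ 1/2 := by
    rw [inv_le_comm₀ (by linarith) (by norm_num)]; linarith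
  set x : ℝ := ((q:ℝ))⁻¹ ^ (j+1) with hx
  have hx0 : 0 < x := by positivity
  have hx2 : x ≤ 1/2 := by
    calc x ≤ ((q:ℝ))⁻¹ ^ 1 := by
          apply pow_le_pow_of_le_one (le_of_lt hr0) (by linarith) (by omega)
      _ ≤ 1/2 := by simpa using hr2
  have h1x : (0:ℝ) < 1 - x := by linarith
  have key : Real.exp (-(2*x)) ≤ 1 - x := by
    have h1 := Real.add_one_le_exp (2*x)
    have h2 : Real.exp (-(2*x)) * Real.exp (2*x) = 1 := by
      rw [← Real.exp_add]; simp
    have h3 := Real.exp_pos (2*x)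
    have h4 := Real.exp_pos (-(2*x))
    nlinarith [mul_pos h4 h3]
  have := (Real.le_log_iff_exp_le h1x).mpr key
  linarith

private noncomputable def cc (q j : ℕ) : ℝ := -Real.log (1 - ((q:ℝ))⁻¹ ^ (j+1))

private lemma hr_facts (hq : 2 ≤ q) : 0 < ((q:ℝ))⁻¹ ∧ ((q:ℝ))⁻¹ < 1 := by
  have hq2 : (2:ℝ) ≤ (q:ℝ) := by exact_mod_cast hq
  constructor
  · positivity
  · rw [inv_lt_one_iff₀]; right; linarith

private lemma factor_pos (hq : 2 ≤ q) (k : ℕ) (hk : 1 ≤ k) :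
    0 < 1 - ((q:ℝ))⁻¹ ^ k ∧ 1 - ((q:ℝ))⁻¹ ^ k < 1 := by
  obtain ⟨hr0, hr1⟩ := hr_facts hq
  have h1 : ((q:ℝ))⁻¹ ^ k < 1 := pow_lt_one₀ hr0.le hr1 (by omega)
  have h2 : 0 < ((q:ℝ))⁻¹ ^ k := by positivity
  constructor <;> linarith

private lemma cc_pos (hq : 2 ≤ q) (j : ℕ) : 0 < cc q j := by
  obtain ⟨h1, h2⟩ := factor_pos hq (j+1) (by omega)
  have := Real.log_neg h1 h2
  unfold cc; linarith

private lemma summable_cc (hq : 2 ≤ q) : Summable (cc q) := by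
  obtain ⟨hr0, hr1⟩ := hr_facts hq
  apply Summable.of_nonneg_of_le (fun j => (cc_pos hq j).le)
    (fun j => neg_log_le hq j)
  have : Summable (fun j : ℕ => (2 * ((q:ℝ))⁻¹) * ((q:ℝ))⁻¹ ^ j) :=
    (summable_geometric_of_lt_one hr0.le hr1).mul_left _
  apply this.congr
  intro j
  rw [pow_succ]; ring

private lemma exp_neg_cc (hq : 2 ≤ q) (j : ℕ) :
    Real.exp (-(cc q j)) = 1 - ((q:ℝ))⁻¹ ^ (j+1) := by
  unfold cc
  rw [neg_neg, Real.exp_log (factor_pos hq (j+1) (by omega)).1]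

private lemma Kq_eq (hq : 2 ≤ q) : Kq q = Real.exp (-(∑' j, cc q j)) := by
  obtain ⟨hr0, hr1⟩ := hr_facts hq
  have hfn : ∀ (_ : Unit) (n : ℕ), 0 < 1 - ((q:ℝ))⁻¹ ^ (n+1) :=
    fun _ n => (factor_pos hq (n+1) (by omega)).1
  have hf : ∀ _ : Unit, Summable fun n : ℕ => Real.log (1 - ((q:ℝ))⁻¹ ^ (n+1)) := by
    intro _
    have := (summable_cc hq).neg
    apply this.congr
    intro j; unfold cc; rw [neg_neg]
  have := Real.rexp_tsum_eq_tprod (ι := ℕ)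
    (f := fun n => 1 - ((q:ℝ))⁻¹ ^ (n+1)) (hfn ()) (hf ())
  rw [Kq, ← this]
  congr 1
  rw [← tsum_neg]
  congr 1 with j
  unfold cc; rw [neg_neg]

end aux

/-- For `0 ≤ u ≤ m-1` and `q ≥ 2`, `A(m,u) > (q/(q-1)) · K_q · q^{mu}`. -/
theorem stmt1 (q m u : ℕ) (hq : 2 ≤ q) (hum : u ≤ m - 1) (hm : 1 ≤ m) :
    ((q:ℝ) / ((q:ℝ) - 1)) * Kq q * (q:ℝ) ^ (m * u) < Aq q m u := by
  obtain ⟨hr0, hr1⟩ := hr_facts hq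
  have hq2 : (2:ℝ) ≤ (q:ℝ) := by exact_mod_cast hq
  have hq0 : (0:ℝ) < (q:ℝ) := by linarith
  have hum' : u ≤ m - 1 := hum
  set r : ℝ := ((q:ℝ))⁻¹ with hrdef
  set P : ℝ := ∏ i ∈ Finset.range u, (1 - r ^ (m - i)) with hP
  -- Step A : Aq = q^(m*u) * P
  have hA : Aq q m u = (q:ℝ) ^ (m * u) * P := by
    rw [Aq, hP]
    have : ∀ i ∈ Finset.range u, (q:ℝ)^m - (q:ℝ)^i = (q:ℝ)^m * (1 - r ^ (m - i)) := by
      intro i hi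
      have hi' : i < u := Finset.mem_range.mp hi
      have him : i ≤ m := by omega
      have hqpow : (q:ℝ)^m = (q:ℝ)^(m-i) * (q:ℝ)^i := by
        rw [← pow_add]; congr 1; omega
      have hrpow : r ^ (m - i) = ((q:ℝ)^(m-i))⁻¹ := by
        rw [hrdef, inv_pow]
      have hne : ((q:ℝ))^(m-i) ≠ 0 := by positivity
      rw [hrpow, mul_sub, mul_one, hqpow]
      field_simp
    rw [Finset.prod_congr rfl this, Finset.prod_mul_distrib, Finset.prod_const,
      Finset.card_range, ← pow_mul]
  -- Step C : Kq < (1-r) * P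
  have hcore : Kq q < (1 - r) * P := by
    set F : Finset ℕ := insert 0 ((Finset.range u).image (fun i => m - i - 1)) with hF
    have hinj : ∀ i ∈ Finset.range u, ∀ i' ∈ Finset.range u,
        m - i - 1 = m - i' - 1 → i = i' := by
      intro i hi i' hi'
      simp only [Finset.mem_range] at hi hi'
      omega
    have h0notin : 0 ∉ (Finset.range u).image (fun i => m - i - 1) := by
      simp only [Finset.mem_image, Finset.mem_range, not_exists]
      intro i hi
      omega
    have hmnot : m ∉ F := by
      simp only [hF, Finset.mem_insert, Finset.mem_image, Finset.mem_range]
      push_neg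
      exact ⟨by omega, fun i hi => by omega⟩
    -- (1 - r) * P = exp (-(∑ j in F, cc q j))
    have hRHS : (1 - r) * P = Real.exp (-(∑ j ∈ F, cc q j)) := by
      have h1 : (1 - r) = Real.exp (-(cc q 0)) := by
        rw [exp_neg_cc hq 0, pow_one]
      have h2 : P = Real.exp (-(∑ i ∈ Finset.range u, cc q (m - i - 1))) := by
        rw [hP, ← Finset.sum_neg_distrib, Real.exp_sum]
        apply Finset.prod_congr rfl
        intro i hi
        have hi' : i < u := Finset.mem_range.mp hi
        have : m - i - 1 + 1 = m - i := by omega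
        rw [exp_neg_cc hq, this]
      rw [h1, h2, ← Real.exp_add, hF, Finset.sum_insert h0notin,
        Finset.sum_image hinj]
      ring_nf
    have hsum_lt : ∑ j ∈ F, cc q j < ∑' j, cc q j := by
      have hle : ∑ j ∈ insert m F, cc q j ≤ ∑' j, cc q j :=
        Summable.sum_le_tsum _ (fun j _ => (cc_pos hq j).le) (summable_cc hq)
      rw [Finset.sum_insert hmnot] at hle
      have := cc_pos hq m
      linarith
    rw [Kq_eq hq, hRHS]
    exact Real.exp_lt_exp.mpr (by linarith)
  -- combine
  have h1r : 0 < 1 - r := by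
    rw [hrdef]; linarith [(hr_facts hq).2]
  have hfrac : (q:ℝ) / ((q:ℝ) - 1) = (1 - r)⁻¹ := by
    rw [hrdef]
    rw [show (1 - ((q:ℝ))⁻¹) = ((q:ℝ) - 1) / (q:ℝ) by field_simp, inv_div]
  have hPlt : (1 - r)⁻¹ * Kq q < P := by
    rw [inv_mul_lt_iff₀ h1r]
    exact hcore
  have hpow : (0:ℝ) < (q:ℝ) ^ (m * u) := by positivity
  calc ((q:ℝ) / ((q:ℝ) - 1)) * Kq q * (q:ℝ) ^ (m * u)
      = ((1 - r)⁻¹ * Kq q) * (q:ℝ) ^ (m * u) := by rw [hfrac]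
    _ < P * (q:ℝ) ^ (m * u) := by
        exact mul_lt_mul_of_pos_right hPlt hpow
    _ = Aq q m u := by rw [hA]; ring
end

section
/- The quantity D(m,u) = q^{mu}/A(m,u) is non-decreasing in u for 0 ≤ u ≤ m, and for even m = 2p with p ≥ 1, D(2p,p) is a non-increasing function of p, with maximum D(2,1) = q²/(q²-1). -/
noncomputable def Dq (q m u : ℕ) : ℝ := (q:ℝ) ^ (m * u) / Aq q m u

lemma hq1 {q : ℕ} (hq : 2 ≤ q) : (1:ℝ) < (q:ℝ) := by
  have : (2:ℝ) ≤ (q:ℝ) := by exact_mod_cast hq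
  linarith

lemma Aq_pos {q m u : ℕ} (hq : 2 ≤ q) (h : u ≤ m) : 0 < Aq q m u := by
  apply Finset.prod_pos
  intro i hi
  rw [Finset.mem_range] at hi
  have : ((q:ℝ))^i < (q:ℝ)^m := pow_lt_pow_right₀ (hq1 hq) (lt_of_lt_of_le hi h)
  linarith

lemma Dq_step {q m u : ℕ} (hq : 2 ≤ q) (h : u < m) : Dq q m u ≤ Dq q m (u+1) := by
  have hA : 0 < Aq q m u := Aq_pos hq h.le
  have hA' : 0 < Aq q m (u+1) := Aq_pos hq h
  have hrw : Aq q m (u+1) = Aq q m u * ((q:ℝ)^m - (q:ℝ)^u) := by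
    unfold Aq; rw [Finset.prod_range_succ]
  have hqu : (0:ℝ) < (q:ℝ)^u := pow_pos (by positivity) u
  unfold Dq
  rw [div_le_div_iff₀ hA hA', hrw, mul_add_one m u, pow_add]
  nlinarith [mul_pos (pow_pos (show (0:ℝ) < q by positivity) (m*u)) hA]

lemma Dq_mono {q : ℕ} (hq : 2 ≤ q) : ∀ m u u', u ≤ u' → u' ≤ m → Dq q m u ≤ Dq q m u' := by
  intro m u u' h
  induction h with
  | refl => intro _; exact le_rfl
  | @step k h ih =>
      intro hk
      exact (ih (by omega)).trans (Dq_step hq (by omega))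

/-- `Dq q m u = ∏_{i<u} (1 - q^{-(m-i)})⁻¹` for `u ≤ m`. -/
lemma Dq_eq {q m u : ℕ} (hq : 2 ≤ q) (h : u ≤ m) :
    Dq q m u = ∏ i ∈ Finset.range u, (1 - ((q:ℝ)⁻¹)^(m-i))⁻¹ := by
  have hq0 : (0:ℝ) < (q:ℝ) := by positivity
  unfold Dq Aq
  rw [pow_mul, show ((q:ℝ)^m)^u = ∏ _i ∈ Finset.range u, (q:ℝ)^m by simp, ← Finset.prod_div_distrib]
  apply Finset.prod_congr rfl
  intro i hi
  rw [Finset.mem_range] at hi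
  have him : i < m := lt_of_lt_of_le hi h
  have h1 : (1:ℝ) - ((q:ℝ)⁻¹)^(m-i) = ((q:ℝ)^m - (q:ℝ)^i) / (q:ℝ)^m := by
    have hpow : (q:ℝ)^(m-i) * (q:ℝ)^i = (q:ℝ)^m := by
      rw [← pow_add]; congr 1; omega
    field_simp
    rw [← hpow, one_div, inv_pow, sub_mul, one_mul, inv_mul_cancel_left₀ (by positivity)]
  rw [h1, inv_div]

/-- Reindexed product formula for `Dq q (2p) p`. -/
lemma Dq_2p {q p : ℕ} (hq : 2 ≤ q) :
    Dq q (2*p) p = ∏ i ∈ Finset.range p, (1 - ((q:ℝ)⁻¹)^(p+1+i))⁻¹ := by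
  rw [Dq_eq hq (by omega)]
  rw [← Finset.prod_range_reflect (fun i => (1 - ((q:ℝ)⁻¹)^(p+1+i))⁻¹) p]
  apply Finset.prod_congr rfl
  intro i hi
  rw [Finset.mem_range] at hi
  rw [show 2*p - i = p+1+(p-1-i) from by omega]

lemma Dq_anti {q : ℕ} (hq : 2 ≤ q) (p : ℕ) (hp : 1 ≤ p) :
    Dq q (2 * (p + 1)) (p + 1) ≤ Dq q (2 * p) p := by
  obtain ⟨r, rfl⟩ : ∃ r, p = r + 1 := ⟨p - 1, by omega⟩
  set e := (q:ℝ)⁻¹ with he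
  have hq0 : (0:ℝ) < q := by positivity
  have he0 : 0 < e := by positivity
  have he2 : e ≤ 1/2 := by
    rw [he]
    rw [inv_le_comm₀ hq0 (by norm_num)]
    have : (2:ℝ) ≤ (q:ℝ) := by exact_mod_cast hq
    linarith
  have hpow : ∀ j : ℕ, 1 ≤ j → e ^ j ≤ 1/2 := by
    intro j hj
    calc e ^ j ≤ e ^ 1 := pow_le_pow_of_le_one he0.le (by linarith) hj
    _ ≤ 1/2 := by simpa using he2
  have hgpos : ∀ j : ℕ, 1 ≤ j → 0 < 1 - e ^ j := by
    intro j hj; have := hpow j hj; linarith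
  rw [Dq_2p hq, Dq_2p hq]
  have hL : ∏ i ∈ Finset.range (r+1+1), (1 - e^(r+1+1+1+i))⁻¹
      = ((∏ i ∈ Finset.range r, (1 - e^(r+3+i))⁻¹) * (1 - e^(2*r+3))⁻¹) * (1 - e^(2*r+4))⁻¹ := by
    rw [Finset.prod_range_succ, Finset.prod_range_succ]
    ring_nf
  have hR : ∏ i ∈ Finset.range (r+1), (1 - e^(r+1+1+i))⁻¹
      = (∏ i ∈ Finset.range r, (1 - e^(r+3+i))⁻¹) * (1 - e^(r+2))⁻¹ := by
    rw [Finset.prod_range_succ']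
    congr 1
    apply Finset.prod_congr rfl
    intro i _
    rw [show r+1+1+(i+1) = r+3+i from by omega]
  rw [hL, hR, mul_assoc]
  have hP : 0 < ∏ i ∈ Finset.range r, (1 - e^(r+3+i))⁻¹ := by
    apply Finset.prod_pos
    intro i _
    exact inv_pos.mpr (hgpos _ (by omega))
  apply mul_le_mul_of_nonneg_left _ hP.le
  -- key inequality
  have ha : 0 < 1 - e^(2*r+3) := hgpos _ (by omega)
  have hb : 0 < 1 - e^(2*r+4) := hgpos _ (by omega)
  have hc : 0 < 1 - e^(r+2) := hgpos _ (by omega)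
  rw [← mul_inv]
  apply inv_anti₀ hc
  have h1 : e^(2*r+3) = e^(r+2) * e^(r+1) := by rw [← pow_add]; congr 1; ring
  have h2 : e^(2*r+4) = e^(r+2) * e^(r+2) := by rw [← pow_add]; congr 1; ring
  have h3 : e^(r+1) ≤ 1/2 := hpow _ (by omega)
  have h4 : e^(r+2) ≤ 1/2 := hpow _ (by omega)
  have h5 : 0 < e^(r+2) := pow_pos he0 _
  have h6 : 0 < e^(r+1) := pow_pos he0 _
  rw [h1, h2]
  nlinarith [mul_le_mul_of_nonneg_left h3 h5.le, mul_le_mul_of_nonneg_left h4 h5.le,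
    mul_pos (mul_pos h5 h5) (mul_pos h5 h6)]

/-- `D(m,u) = q^{mu}/A(m,u)` is non-decreasing in `u` for `0 ≤ u ≤ m`; for even
`m = 2p` with `p ≥ 1`, `D(2p,p)` is non-increasing in `p`, with maximum
`D(2,1) = q²/(q²-1)`. -/
theorem stmt3 (q : ℕ) (hq : 2 ≤ q) :
    (∀ m u u', u ≤ u' → u' ≤ m → Dq q m u ≤ Dq q m u') ∧
    (∀ p, 1 ≤ p → Dq q (2 * (p + 1)) (p + 1) ≤ Dq q (2 * p) p) ∧
    (∀ p, 1 ≤ p → Dq q (2 * p) p ≤ Dq q 2 1) ∧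
    Dq q 2 1 = (q:ℝ)^2 / ((q:ℝ)^2 - 1) := by
  have h4 : Dq q 2 1 = (q:ℝ)^2 / ((q:ℝ)^2 - 1) := by
    unfold Dq Aq
    norm_num [Finset.prod_range_one]
  refine ⟨Dq_mono hq, Dq_anti hq, ?_, h4⟩
  intro p hp
  induction p, hp using Nat.le_induction with
  | base => norm_num
  | succ p hp ih => exact (Dq_anti hq p hp).trans ih
end

section
/- Let V be an elementary linear subspace of GF(q^m)^n of dimension v. Then every vector in V has rank at most v; moreover, if v ≤ m then V contains a vector of rank exactly v, so the rank diameter δ(V) = max_{x ∈ V} rk(x) equals v. -/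
noncomputable def rk (Fq : Type*) {F : Type*} [Field Fq] [Field F] [Algebra Fq F] {n : ℕ} (x : Fin n → F) : ℕ :=
  Module.finrank Fq (Submodule.span Fq (Set.range x))

def IsElementary (Fq : Type*) {F : Type*} [Field Fq] [Field F] [Algebra Fq F] {n : ℕ} (V : Submodule F (Fin n → F)) : Prop :=
  ∃ b : Module.Basis (Fin (Module.finrank F V)) F V,
    ∀ i j, ((b i : Fin n → F) j) ∈ Set.range (algebraMap Fq F)

/-- Every vector of an elementary linear subspace of dimension `v` has rank at most `v`;
if `v ≤ m`, the subspace contains a vector of rank exactly `v`, so its rank diameter is `v`. -/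
theorem stmt8 (q m n v : ℕ) (Fq F : Type) [Field Fq] [Fintype Fq] [Field F] [Algebra Fq F]
    (hq : Fintype.card Fq = q) (hm : Module.finrank Fq F = m)
    (V : Submodule F (Fin n → F)) (hV : IsElementary Fq V) (hv : Module.finrank F V = v) :
    (∀ x ∈ V, rk Fq x ≤ v) ∧ (v ≤ m → ∃ x ∈ V, rk Fq x = v) := by
  subst hv hm
  classical
  obtain ⟨b, hb⟩ := hV
  choose a ha using hb
  have hcoe : ∀ c : Fin (Module.finrank F ↥V) → F,
      ((∑ i, c i • b i : V) : Fin n → F) = ∑ i, c i • (b i : Fin n → F) := by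
    intro c
    push_cast
    rfl
  have key : ∀ (c : Fin (Module.finrank F ↥V) → F) (j : Fin n),
      ((∑ i, c i • b i : V) : Fin n → F) j = ∑ i, a i j • c i := by
    intro c j
    rw [hcoe, Finset.sum_apply]
    refine Finset.sum_congr rfl fun i _ => ?_
    rw [Pi.smul_apply, smul_eq_mul, ← ha i j, Algebra.smul_def, mul_comm]
  have le_span : ∀ c : Fin (Module.finrank F ↥V) → F,
      Submodule.span Fq (Set.range ((∑ i, c i • b i : V) : Fin n → F)) ≤
        Submodule.span Fq (Set.range c) := by
    intro c
    rw [Submodule.span_le]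
    rintro _ ⟨j, rfl⟩
    rw [key c j]
    exact Submodule.sum_mem _ fun i _ =>
      Submodule.smul_mem _ _ (Submodule.subset_span ⟨i, rfl⟩)
  constructor
  · intro x hx
    set c : Fin (Module.finrank F ↥V) → F := fun i => b.repr ⟨x, hx⟩ i with hcdef
    have hx' : x = ((∑ i, c i • b i : V) : Fin n → F) :=
      (congrArg Subtype.val (b.sum_repr ⟨x, hx⟩)).symm
    haveI : Module.Finite Fq (Submodule.span Fq (Set.range c)) :=
      Module.Finite.span_of_finite Fq (Set.finite_range c)
    have h1 : rk Fq x ≤ Module.finrank Fq (Submodule.span Fq (Set.range c)) := by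
      apply Submodule.finrank_mono
      rw [hx']
      exact le_span c
    exact h1.trans (by simpa [Set.finrank] using finrank_range_le_card (R := Fq) c)
  · intro hvm
    rcases Nat.eq_zero_or_pos (Module.finrank F ↥V) with h0 | hpos
    · refine ⟨0, V.zero_mem, ?_⟩
      have hsp : Submodule.span Fq (Set.range (0 : Fin n → F)) = ⊥ := by
        rw [eq_bot_iff, Submodule.span_le]
        rintro _ ⟨j, rfl⟩
        simp
      rw [h0, rk, hsp, finrank_bot]
    · haveI : Module.Finite Fq F := Module.finite_of_finrank_pos (lt_of_lt_of_le hpos hvm)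
      set bF := Module.finBasis Fq F with hbF
      set c : Fin (Module.finrank F ↥V) → F := fun i => bF (Fin.castLE hvm i) with hc
      have hcind : LinearIndependent Fq c :=
        bF.linearIndependent.comp _ (Fin.castLE_injective hvm)
      set xV : V := ∑ i, c i • b i with hxV
      refine ⟨(xV : Fin n → F), xV.2, ?_⟩
      -- rows of the coefficient matrix are linearly independent over Fq
      have hrow : LinearIndependent Fq a := by
        rw [Fintype.linearIndependent_iff]
        intro g hg
        have hb0 : ∑ i, (algebraMap Fq F (g i)) • b i = 0 := by
          apply Subtype.val_injective
          rw [hcoe]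
          simp only [Submodule.coe_zero]
          funext j
          rw [Finset.sum_apply]
          have : ∀ i, (algebraMap Fq F (g i) • (b i : Fin n → F)) j
              = algebraMap Fq F (g i * a i j) := by
            intro i
            rw [Pi.smul_apply, smul_eq_mul, ← ha i j, map_mul]
          simp_rw [this, ← map_sum]
          have : ∑ i, g i * a i j = 0 := by
            have := congrFun hg j
            simpa [Finset.sum_apply] using this
          rw [this, map_zero, Pi.zero_apply]
        have hz := Fintype.linearIndependent_iff.mp b.linearIndependent
          (fun i => algebraMap Fq F (g i)) hb0
        intro i
        exact (algebraMap Fq F).injective (by simpa using hz i)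
      -- the matrix has full row rank, so mulVec is surjective
      set M : Matrix (Fin (Module.finrank F ↥V)) (Fin n) Fq := Matrix.of a with hM
      have hrank : M.rank = Module.finrank F ↥V := by
        have := hrow.rank_matrix (M := M)
        simpa using this
      have htop : LinearMap.range M.mulVecLin = ⊤ := by
        apply Submodule.eq_top_of_finrank_eq
        rw [← Matrix.rank, hrank, Module.finrank_fintype_fun_eq_card, Fintype.card_fin]
      have hsurj : Function.Surjective M.mulVec := by
        intro y
        obtain ⟨t, ht⟩ := LinearMap.range_eq_top.mp htop y
        exact ⟨t, ht⟩
      have hxj : ∀ j, (xV : Fin n → F) j = ∑ i, a i j • c i := fun j => key c j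
      have hle2 : Submodule.span Fq (Set.range c) ≤
          Submodule.span Fq (Set.range ((xV : Fin n → F))) := by
        rw [Submodule.span_le]
        rintro _ ⟨k, rfl⟩
        obtain ⟨t, ht⟩ := hsurj (Pi.single k 1)
        have hck : c k = ∑ j, t j • (xV : Fin n → F) j := by
          symm
          calc ∑ j, t j • (xV : Fin n → F) j
              = ∑ j, ∑ i, (t j * a i j) • c i := by
                simp_rw [hxj, Finset.smul_sum, smul_smul]
            _ = ∑ i, (∑ j, a i j * t j) • c i := by
                rw [Finset.sum_comm]
                simp_rw [Finset.sum_smul, mul_comm]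
            _ = ∑ i, (M.mulVec t i) • c i := by
                refine Finset.sum_congr rfl fun i _ => ?_
                congr 1
            _ = c k := by
                rw [ht]
                simp [Pi.single_apply]
        rw [hck]
        exact Submodule.sum_mem _ fun j _ =>
          Submodule.smul_mem _ _ (Submodule.subset_span ⟨j, rfl⟩)
      have hspan : Submodule.span Fq (Set.range ((xV : Fin n → F)))
          = Submodule.span Fq (Set.range c) :=
        le_antisymm (le_span c) hle2
      rw [rk, hspan, finrank_span_eq_card hcind, Fintype.card_fin]
end

section
/- A vector x ∈ GF(q^m)^n has rank at most u if and only if x belongs to some elementary linear subspace of GF(q^m)^n of dimension u. -/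
open Module Submodule

/-- Vectors with coordinates in the base field that are `Fq`-independent are `F`-independent. -/
lemma li_algebraMap {Fq F : Type} [Field Fq] [Field F] [Algebra Fq F] {n u : ℕ}
    {w : Fin u → (Fin n → Fq)} (hw : LinearIndependent Fq w) :
    LinearIndependent F (fun i => fun j => algebraMap Fq F (w i j)) := by
  classical
  rw [Fintype.linearIndependent_iff] at hw ⊢
  intro g hg i
  set B := Basis.ofVectorSpace Fq F
  have hk : ∀ k, (fun i => B.repr (g i) k) = 0 := by
    intro k
    funext i0
    refine hw (fun i => B.repr (g i) k) ?_ i0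
    funext j
    have h1 : ∑ i, (w i j) • g i = 0 := by
      have := congrFun hg j
      simp only [Finset.sum_apply, Pi.smul_apply, Pi.zero_apply, smul_eq_mul] at this ⊢
      calc ∑ i, (w i j) • g i = ∑ i, g i * algebraMap Fq F (w i j) := by
            refine Finset.sum_congr rfl fun i _ => ?_
            rw [Algebra.smul_def, mul_comm]
        _ = 0 := this
    have h2 := congrArg (fun y => B.repr y k) h1
    simpa [map_sum, Finsupp.smul_apply, smul_eq_mul, mul_comm] using h2
  have : B.repr (g i) = 0 := by
    ext k
    exact congrFun (hk k) i
  simpa using B.repr.injective (by simpa using this)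

/-- Any independent family can be extended to an independent family of any size up to the
dimension, with larger span. -/
lemma extend_li {K V : Type*} [Field K] [AddCommGroup V] [Module K V] [FiniteDimensional K V]
    {t u : ℕ} (htu : t ≤ u) (hun : u ≤ Module.finrank K V) {w : Fin t → V}
    (hw : LinearIndependent K w) :
    ∃ w' : Fin u → V, LinearIndependent K w' ∧
      Submodule.span K (Set.range w) ≤ Submodule.span K (Set.range w') := by
  induction u, htu using Nat.le_induction with
  | base => exact ⟨w, hw, le_rfl⟩
  | succ k hk ih =>
    obtain ⟨w', hw', hs⟩ := ih (le_trans (Nat.le_succ k) hun)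
    obtain ⟨y, hy⟩ := exists_linearIndependent_snoc_of_lt_finrank hw'
      (lt_of_lt_of_le (Nat.lt_succ_self k) hun)
    refine ⟨Fin.snoc w' y, hy, hs.trans (Submodule.span_mono ?_)⟩
    rintro - ⟨i, rfl⟩
    exact ⟨i.castSucc, by simp⟩

/-- `x ∈ GF(q^m)^n` has rank at most `u` iff it belongs to some elementary linear
subspace of dimension `u`. -/
theorem stmt9 (q m n u : ℕ) (Fq F : Type) [Field Fq] [Fintype Fq] [Field F] [Algebra Fq F]
    (hq : Fintype.card Fq = q) (hm : Module.finrank Fq F = m) (hu : u ≤ n)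
    (x : Fin n → F) :
    rk Fq x ≤ u ↔
      ∃ V : Submodule F (Fin n → F),
        IsElementary Fq V ∧ Module.finrank F V = u ∧ x ∈ V := by
  classical
  constructor
  · intro h
    -- decompose x over a basis of the Fq-span of its coordinates
    set S := Submodule.span Fq (Set.range x) with hS
    have : FiniteDimensional Fq S := FiniteDimensional.span_of_finite Fq (Set.finite_range x)
    set r := Module.finrank Fq S with hr
    let e : Basis (Fin r) Fq S := Module.finBasis Fq S
    have hxj : ∀ j, x j ∈ S := fun j => subset_span (Set.mem_range_self j)
    let v : Fin r → (Fin n → Fq) := fun i j => e.repr ⟨x j, hxj j⟩ i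
    have hx : ∀ j, x j = ∑ i, algebraMap Fq F (v i j) * (e i : F) := by
      intro j
      have h2 : x j = ((∑ i, (e.repr ⟨x j, hxj j⟩) i • e i : S) : F) :=
        congrArg Subtype.val (e.sum_repr ⟨x j, hxj j⟩).symm
      refine h2.trans ?_
      push_cast
      refine Finset.sum_congr rfl fun i _ => ?_
      rw [Algebra.smul_def]
    -- extend a basis of the span of the coordinate vectors to `u` independent vectors
    set T := Submodule.span Fq (Set.range v) with hT
    let b : Basis (Fin (Module.finrank Fq T)) Fq T := Module.finBasis Fq T
    have hbli : LinearIndependent Fq (fun i => (b i : Fin n → Fq)) :=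
      b.linearIndependent.map' T.subtype (ker_subtype T)
    have htu : Module.finrank Fq T ≤ u := by
      refine le_trans ?_ h
      exact le_trans (finrank_range_le_card v) (by simp [hr, rk, hS]; exact le_rfl)
    have hun : u ≤ Module.finrank Fq (Fin n → Fq) := by
      simpa [Module.finrank_pi] using hu
    obtain ⟨w, hwli, hwspan⟩ := extend_li htu hun hbli
    have hTspan : T ≤ Submodule.span Fq (Set.range w) := by
      refine le_trans ?_ hwspan
      have : Set.range (fun i => (b i : Fin n → Fq)) = T.subtype '' Set.range b := by
        rw [← Set.range_comp]; rfl
      rw [this, ← Submodule.map_span, b.span_eq, Submodule.map_top, Submodule.range_subtype]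
    -- the elementary subspace
    set W : Fin u → (Fin n → F) := fun i => fun j => algebraMap Fq F (w i j) with hW
    have hWli : LinearIndependent F W := li_algebraMap hwli
    refine ⟨Submodule.span F (Set.range W), ?_, ?_, ?_⟩
    · -- elementary
      have hd : Module.finrank F (Submodule.span F (Set.range W)) = u := by
        simpa using finrank_span_eq_card hWli
      refine ⟨(Basis.span hWli).reindex (finCongr hd.symm), fun i j => ?_⟩
      rw [Basis.reindex_apply]
      rw [Basis.span_apply]
      exact ⟨w ((finCongr hd.symm).symm i) j, rfl⟩
    · simpa using finrank_span_eq_card hWli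
    · -- x belongs to it
      have hφ : ∀ i : Fin r, (fun j => algebraMap Fq F (v i j)) ∈ Submodule.span F (Set.range W) := by
        intro i
        have hvi : v i ∈ Submodule.span Fq (Set.range w) :=
          hTspan (subset_span (Set.mem_range_self i))
        rw [mem_span_range_iff_exists_fun] at hvi
        obtain ⟨c, hc⟩ := hvi
        have : (fun j => algebraMap Fq F (v i j)) = ∑ k, algebraMap Fq F (c k) • W k := by
          funext j
          rw [← hc]
          simp only [Finset.sum_apply, Pi.smul_apply, hW, smul_eq_mul, ← map_mul]
          rw [← map_sum]
        rw [this]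
        exact Submodule.sum_mem _ fun k _ =>
          Submodule.smul_mem _ _ (subset_span (Set.mem_range_self k))
      have hxsum : x = ∑ i, (e i : F) • (fun j => algebraMap Fq F (v i j)) := by
        funext j
        simp only [Finset.sum_apply, Pi.smul_apply, smul_eq_mul]
        rw [hx j]
        exact Finset.sum_congr rfl fun i _ => mul_comm _ _
      rw [hxsum]
      exact Submodule.sum_mem _ fun i _ => Submodule.smul_mem _ _ (hφ i)
  · rintro ⟨V, ⟨b, hb⟩, hV, hxV⟩
    choose c hc using hb
    set a : Fin (Module.finrank F V) → F := fun i => b.repr ⟨x, hxV⟩ i with ha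
    have hx : ∀ j, x j ∈ Submodule.span Fq (Set.range a) := by
      intro j
      have h2 : x j = ((∑ i, (b.repr ⟨x, hxV⟩) i • b i : V) : Fin n → F) j :=
        congrFun (congrArg Subtype.val (b.sum_repr ⟨x, hxV⟩).symm) j
      have h3 : x j = ∑ i, (c i j) • a i := by
        refine h2.trans ?_
        push_cast
        simp only [Finset.sum_apply, Pi.smul_apply, smul_eq_mul]
        refine Finset.sum_congr rfl fun i _ => ?_
        rw [← hc i j, Algebra.smul_def, mul_comm]
      rw [h3]
      exact Submodule.sum_mem _ fun i _ =>
        Submodule.smul_mem _ _ (subset_span (Set.mem_range_self i))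
    have hle : Submodule.span Fq (Set.range x) ≤ Submodule.span Fq (Set.range a) := by
      rw [span_le]
      rintro - ⟨j, rfl⟩
      exact hx j
    have : FiniteDimensional Fq (Submodule.span Fq (Set.range a)) :=
      FiniteDimensional.span_of_finite Fq (Set.finite_range a)
    calc rk Fq x ≤ Module.finrank Fq (Submodule.span Fq (Set.range a)) :=
          Submodule.finrank_mono hle
      _ ≤ Fintype.card (Fin (Module.finrank F V)) := finrank_range_le_card a
      _ = u := by simp [hV]
end

section
/- Let V and V' be complementary subspaces of GF(q^m)^n and let x ∈ GF(q^m)^n with projections x_V and x_{V'}. Then rk(x_V) ≤ rk(x) and rk(x) ≤ rk(x_V) + rk(x_{V'}), where the first inequality holds when V and V' are elementary linear subspaces. -/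
open Module Submodule in
/-- Key lemma: for elementary complementary subspaces, each coordinate of the
projection `xV` lies in the `Fq`-span of the coordinates of `x`. -/
lemma key_coord_mem {Fq F : Type} [Field Fq] [Field F] [Algebra Fq F] {n : ℕ}
    (V V' : Submodule F (Fin n → F)) (hcompl : IsCompl V V')
    (x xV xV' : Fin n → F) (hxV : xV ∈ V) (hxV' : xV' ∈ V') (hx : x = xV + xV')
    (hV : IsElementary Fq V) (hV' : IsElementary Fq V') :
    ∀ j, xV j ∈ Submodule.span Fq (Set.range x) := by
  rcases Nat.eq_zero_or_pos n with hn | hn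
  · exact fun j => absurd j.isLt (by omega)
  obtain ⟨b, hb⟩ := hV
  obtain ⟨b', hb'⟩ := hV'
  set B : (Fin (finrank F V) ⊕ Fin (finrank F V')) → (Fin n → F) :=
    Sum.elim (fun i => (b i : Fin n → F)) (fun i => (b' i : Fin n → F)) with hB
  have hbV : ∀ i, (b i : Fin n → F) ∈ V := fun i => (b i).2
  have hbV' : ∀ i, (b' i : Fin n → F) ∈ V' := fun i => (b' i).2
  -- linear independence over F
  have hindF : LinearIndependent F B := by
    refine LinearIndependent.sum_type ?_ ?_ ?_
    · exact b.linearIndependent.map' V.subtype (Submodule.ker_subtype V)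
    · exact b'.linearIndependent.map' V'.subtype (Submodule.ker_subtype V')
    · refine Disjoint.mono ?_ ?_ hcompl.disjoint <;>
        rw [Submodule.span_le] <;> rintro _ ⟨i, rfl⟩
      · exact hbV i
      · exact hbV' i
  -- cardinality
  have hcard : Fintype.card (Fin (finrank F V) ⊕ Fin (finrank F V')) = n := by
    rw [Fintype.card_sum, Fintype.card_fin, Fintype.card_fin,
      Submodule.finrank_add_eq_of_isCompl hcompl, Module.finrank_fin_fun]
  -- coordinates of B lie in the image of Fq
  have hBK : ∀ i j, ∃ a : Fq, algebraMap Fq F a = B i j := by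
    rintro (i | i) j
    · exact hb i j
    · exact hb' i j
  -- independence over Fq
  have hKinj : Function.Injective (algebraMap Fq F) := RingHom.injective _
  have hindK : LinearIndependent Fq B := hindF.restrict_scalars' Fq
  -- lift to Fq^n
  set B'' : (Fin (finrank F V) ⊕ Fin (finrank F V')) → (Fin n → Fq) :=
    fun i j => (hBK i j).choose with hB''
  set φ : (Fin n → Fq) →ₗ[Fq] (Fin n → F) :=
    LinearMap.pi (fun j => (Algebra.linearMap Fq F).comp (LinearMap.proj j)) with hφ
  have hφapp : ∀ v j, φ v j = algebraMap Fq F (v j) := fun v j => rfl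
  have hφB : φ ∘ B'' = B := by
    funext i; funext j
    exact (hBK i j).choose_spec
  have hindK'' : LinearIndependent Fq B'' := by
    apply LinearIndependent.of_comp φ
    rw [hφB]; exact hindK
  haveI : Nonempty (Fin (finrank F V) ⊕ Fin (finrank F V')) := by
    rw [← Fintype.card_pos_iff, hcard]; exact hn
  -- basis of Fq^n
  set C : Basis (Fin (finrank F V) ⊕ Fin (finrank F V')) Fq (Fin n → Fq) :=
    basisOfLinearIndependentOfCardEqFinrank hindK''
      (by rw [hcard, Module.finrank_fin_fun]) with hC
  have hCi : ∀ i, C i = B'' i := fun i => by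
    rw [hC, coe_basisOfLinearIndependentOfCardEqFinrank]
  -- coefficients
  set d : Fin n → (Fin (finrank F V) ⊕ Fin (finrank F V')) → Fq :=
    fun j i => C.repr (Pi.single j 1) i with hd
  have hej : ∀ j : Fin n, (Pi.single j (1:F) : Fin n → F)
      = ∑ i, algebraMap Fq F (d j i) • B i := by
    intro j
    have h1 : (Pi.single j (1:Fq) : Fin n → Fq) = ∑ i, d j i • C i := (C.sum_repr _).symm
    have h2 := congrArg φ h1
    rw [map_sum] at h2
    have h3 : φ (Pi.single j (1:Fq)) = (Pi.single j (1:F) : Fin n → F) := by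
      funext j'
      rw [hφapp]
      by_cases h : j' = j
      · subst h; simp
      · simp [Pi.single_apply, Ne.symm h]
    rw [h3] at h2
    rw [h2]
    refine Finset.sum_congr rfl fun i _ => ?_
    rw [hCi, map_smul, show φ (B'' i) = B i from congrFun hφB i, algebraMap_smul]
  -- decompose x
  have hxsum : x = ∑ i, (∑ j : Fin n, x j * algebraMap Fq F (d j i)) • B i := by
    have h0 : x = ∑ j : Fin n, x j • (Pi.single j (1:F) : Fin n → F) := by
      funext j'
      rw [Finset.sum_apply]
      simp [Pi.single_apply, Finset.sum_ite_eq', mul_comm]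
    calc x = ∑ j : Fin n, x j • (Pi.single j (1:F) : Fin n → F) := h0
      _ = ∑ j : Fin n, x j • ∑ i, algebraMap Fq F (d j i) • B i := by
          refine Finset.sum_congr rfl fun j _ => by rw [hej]
      _ = ∑ j : Fin n, ∑ i, (x j * algebraMap Fq F (d j i)) • B i := by
          refine Finset.sum_congr rfl fun j _ => ?_
          rw [Finset.smul_sum]
          refine Finset.sum_congr rfl fun i _ => ?_
          rw [smul_smul]
      _ = ∑ i, ∑ j : Fin n, (x j * algebraMap Fq F (d j i)) • B i := Finset.sum_comm
      _ = ∑ i, (∑ j : Fin n, x j * algebraMap Fq F (d j i)) • B i := by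
          refine Finset.sum_congr rfl fun i _ => ?_
          rw [Finset.sum_smul]
  set c : (Fin (finrank F V) ⊕ Fin (finrank F V')) → F :=
    fun i => ∑ j : Fin n, x j * algebraMap Fq F (d j i) with hc
  set yV : Fin n → F := ∑ i : Fin (finrank F V), c (Sum.inl i) • (b i : Fin n → F) with hyV
  set yV' : Fin n → F := ∑ i : Fin (finrank F V'), c (Sum.inr i) • (b' i : Fin n → F) with hyV'
  have hyVmem : yV ∈ V := Submodule.sum_mem _ fun i _ => Submodule.smul_mem _ _ (hbV i)
  have hyV'mem : yV' ∈ V' := Submodule.sum_mem _ fun i _ => Submodule.smul_mem _ _ (hbV' i)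
  have hxyy : x = yV + yV' := by
    rw [hxsum, Fintype.sum_sum_type]
    rfl
  -- uniqueness of decomposition
  have hxVyV : xV = yV := by
    have hmem : xV - yV ∈ V := Submodule.sub_mem _ hxV hyVmem
    have hmem' : xV - yV ∈ V' := by
      have heq : xV - yV = yV' - xV' := by
        rw [sub_eq_sub_iff_add_eq_add]
        rw [← hx, hxyy, add_comm]
      rw [heq]
      exact Submodule.sub_mem _ hyV'mem hxV'
    have hd := hcompl.disjoint
    rw [Submodule.disjoint_def] at hd
    exact sub_eq_zero.mp (hd _ hmem hmem')
  -- conclude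
  intro j
  rw [hxVyV, hyV, Finset.sum_apply]
  refine Submodule.sum_mem _ fun i _ => ?_
  rw [Pi.smul_apply, hc, smul_eq_mul, Finset.sum_mul]
  refine Submodule.sum_mem _ fun j' _ => ?_
  obtain ⟨a', ha'⟩ := hb i j
  have heq : x j' * algebraMap Fq F (d j' (Sum.inl i)) * (b i : Fin n → F) j
      = (d j' (Sum.inl i) * a') • x j' := by
    rw [Algebra.smul_def, map_mul, ha']; ring
  rw [heq]
  exact Submodule.smul_mem _ _ (Submodule.subset_span ⟨j', rfl⟩)

/-- For complementary subspaces `V ⊕ V' = GF(q^m)^n` and `x = x_V + x_{V'}`: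
`rk(x) ≤ rk(x_V) + rk(x_{V'})`, and if `V` and `V'` are elementary then
`rk(x_V) ≤ rk(x)`. -/
theorem stmt12 (q m n : ℕ) (Fq F : Type) [Field Fq] [Fintype Fq] [Field F] [Algebra Fq F]
    (hq : Fintype.card Fq = q) (hm : Module.finrank Fq F = m)
    (V V' : Submodule F (Fin n → F)) (hcompl : IsCompl V V')
    (x xV xV' : Fin n → F) (hxV : xV ∈ V) (hxV' : xV' ∈ V') (hx : x = xV + xV') :
    rk Fq x ≤ rk Fq xV + rk Fq xV' ∧
    (IsElementary Fq V → IsElementary Fq V' → rk Fq xV ≤ rk Fq x) := by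
  haveI h1 : FiniteDimensional Fq (Submodule.span Fq (Set.range x)) :=
    FiniteDimensional.span_of_finite _ (Set.finite_range x)
  haveI h2 : FiniteDimensional Fq (Submodule.span Fq (Set.range xV)) :=
    FiniteDimensional.span_of_finite _ (Set.finite_range xV)
  haveI h3 : FiniteDimensional Fq (Submodule.span Fq (Set.range xV')) :=
    FiniteDimensional.span_of_finite _ (Set.finite_range xV')
  constructor
  · have hle : Submodule.span Fq (Set.range x) ≤
        Submodule.span Fq (Set.range xV) ⊔ Submodule.span Fq (Set.range xV') := by
      rw [Submodule.span_le]
      rintro _ ⟨j, rfl⟩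
      rw [hx]
      exact Submodule.add_mem_sup (Submodule.subset_span ⟨j, rfl⟩)
        (Submodule.subset_span ⟨j, rfl⟩)
    calc rk Fq x ≤ Module.finrank Fq
          ↥(Submodule.span Fq (Set.range xV) ⊔ Submodule.span Fq (Set.range xV')) :=
        Submodule.finrank_mono hle
      _ ≤ rk Fq xV + rk Fq xV' :=
        Submodule.finrank_add_le_finrank_add_finrank _ _
  · intro hV hV'
    have hle : Submodule.span Fq (Set.range xV) ≤ Submodule.span Fq (Set.range x) := by
      rw [Submodule.span_le]
      rintro _ ⟨j, rfl⟩
      exact key_coord_mem V V' hcompl x xV xV' hxV hxV' hx hV hV' j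
    exact Submodule.finrank_mono hle
end

section
/- Let C ⊆ GF(q^m)^n be an MRD code (possibly nonlinear) with n ≤ m, |C| = q^{mk}, and minimum rank distance d = n - k + 1. For any elementary linear subspace K of dimension k with elementary complement K', and any vector y ∈ K, there exists a unique codeword c ∈ C whose projection onto K along K' equals y. -/
theorem rk_le_of_mem_elementary {Fq F : Type} [Field Fq] [Field F] [Algebra Fq F] {n : ℕ}
    {V : Submodule F (Fin n → F)} (hV : IsElementary Fq V)
    {x : Fin n → F} (hx : x ∈ V) : rk Fq x ≤ Module.finrank F V := by
  obtain ⟨b, hb⟩ := hV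
  set a : Fin (Module.finrank F V) → F := fun i => b.repr ⟨x, hx⟩ i with ha
  have hspan : Submodule.span Fq (Set.range x) ≤ Submodule.span Fq (Set.range a) := by
    rw [Submodule.span_le]
    rintro _ ⟨j, rfl⟩
    have hxsum : (⟨x, hx⟩ : V) = ∑ i, a i • b i := (b.sum_repr ⟨x, hx⟩).symm
    have hxj : x j = ∑ i, a i * (b i : Fin n → F) j := by
      have := congrArg (fun v : V => (v : Fin n → F) j) hxsum
      simpa using this
    rw [SetLike.mem_coe, hxj]
    apply Submodule.sum_mem
    intro i _
    obtain ⟨c, hc⟩ := hb i j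
    rw [← hc, mul_comm, ← Algebra.smul_def]
    exact Submodule.smul_mem _ _ (Submodule.subset_span ⟨i, rfl⟩)
  calc rk Fq x ≤ Module.finrank Fq (Submodule.span Fq (Set.range a)) := by
        classical
        haveI : Module.Finite Fq (Submodule.span Fq (Set.range a)) := by
          apply FiniteDimensional.span_of_finite
          exact Set.finite_range a
        exact Submodule.finrank_mono hspan
    _ ≤ Module.finrank F V := by simpa [Set.finrank] using finrank_range_le_card (R := Fq) a

/-- Basic combinatorial property of MRD codes: for any elementary linear subspace `K` of
dimension `k` with elementary complement `K'`, and any `y ∈ K`, there is a unique codeword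
whose projection onto `K` along `K'` is `y` (i.e. `c - y ∈ K'`). -/
theorem stmt13 (q m n k : ℕ) (Fq F : Type) [Field Fq] [Fintype Fq] [Field F] [Algebra Fq F]
    (hq : Fintype.card Fq = q) (hm : Module.finrank Fq F = m)
    (hk : 1 ≤ k) (hkn : k ≤ n) (hnm : n ≤ m)
    (C : Set (Fin n → F)) (hcard : Nat.card C = q ^ (m * k))
    (hMRD : ∀ c ∈ C, ∀ c' ∈ C, c ≠ c' → n - k + 1 ≤ rk Fq (c - c'))
    (K K' : Submodule F (Fin n → F)) (hK : IsElementary Fq K) (hK' : IsElementary Fq K')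
    (hdim : Module.finrank F K = k) (hcompl : IsCompl K K')
    (y : Fin n → F) (hy : y ∈ K) :
    ∃! c : Fin n → F, c ∈ C ∧ c - y ∈ K' := by
  haveI : FiniteDimensional Fq F := FiniteDimensional.of_finrank_pos (by rw [hm]; omega)
  haveI : Finite F := Module.finite_of_finite Fq
  haveI := Fintype.ofFinite F
  -- dimension of K'
  have hn : Module.finrank F (Fin n → F) = n := by simp
  have hdim' : Module.finrank F K' = n - k := by
    have := Submodule.finrank_add_eq_of_isCompl hcompl
    rw [hdim, hn] at this
    omega
  -- any two distinct codewords cannot differ by an element of K'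
  have key : ∀ c₁ ∈ C, ∀ c₂ ∈ C, c₁ - c₂ ∈ K' → c₁ = c₂ := by
    intro c₁ h₁ c₂ h₂ hmem
    by_contra hne
    have h1 := hMRD c₁ h₁ c₂ h₂ hne
    have h2 := rk_le_of_mem_elementary hK' hmem
    rw [hdim'] at h2
    omega
  -- the projection map
  set π := K.linearProjOfIsCompl K' hcompl with hπ
  have hπy : π y = ⟨y, hy⟩ := Submodule.linearProjOfIsCompl_apply_left hcompl ⟨y, hy⟩
  set f : C → K := fun c => π c with hf
  have hinj : Function.Injective f := by
    rintro ⟨c₁, h₁⟩ ⟨c₂, h₂⟩ heq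
    have : π (c₁ - c₂) = 0 := by
      simp only [map_sub]
      simpa [hf] using congrArg (fun z => z - π c₂) heq
    have hmem : c₁ - c₂ ∈ K' := (Submodule.linearProjOfIsCompl_apply_eq_zero_iff hcompl).1 this
    exact Subtype.ext (key c₁ h₁ c₂ h₂ hmem)
  -- cardinalities agree
  have hcardF : Fintype.card F = q ^ m := by
    rw [Module.card_eq_pow_finrank (K := Fq) (V := F), hq, hm]
  haveI := Fintype.ofFinite K
  have hcardK : Nat.card K = q ^ (m * k) := by
    rw [Nat.card_eq_fintype_card, Module.card_eq_pow_finrank (K := F) (V := K), hcardF, hdim,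
      ← pow_mul]
  have hbij : Function.Bijective f :=
    (Nat.bijective_iff_injective_and_card f).mpr ⟨hinj, by rw [hcard, hcardK]⟩
  obtain ⟨⟨c, hc⟩, hfc⟩ := hbij.surjective ⟨y, hy⟩
  refine ⟨c, ⟨hc, ?_⟩, ?_⟩
  · have : π (c - y) = 0 := by
      simp only [map_sub]
      rw [hπy, show π c = ⟨y, hy⟩ from hfc, sub_self]
    exact (Submodule.linearProjOfIsCompl_apply_eq_zero_iff hcompl).1 this
  · rintro c' ⟨hc', hmem'⟩
    have hmemc : c - y ∈ K' := by
      have : π (c - y) = 0 := by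
        simp only [map_sub]
        rw [hπy, show π c = ⟨y, hy⟩ from hfc, sub_self]
      exact (Submodule.linearProjOfIsCompl_apply_eq_zero_iff hcompl).1 this
    have : c' - c ∈ K' := by
      have := Submodule.sub_mem K' hmem' hmemc
      simpa using this
    exact key c' hc' c hc this
end

section
/- Let C ⊆ GF(q^m)^n be an MRD code (possibly nonlinear) with n ≤ m, |C| = q^{mk}, redundancy r = n - k, and minimum rank distance d = n - k + 1. Then for every u ≥ d, the number A_u of codewords in C of rank u satisfies A_u ≤ [n choose u]_q · A(m, u - r). -/
open Module Submodule Set Finset Matrix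

section AuxMRD
set_option linter.unusedSectionVars false


variable {K W : Type*} [Field K] [Fintype K] [AddCommGroup W] [Module K W] [FiniteDimensional K W]
  [Finite W]

lemma card_subspaces_mul_le (u : ℕ) (hu0 : 0 < u) :
    Nat.card {V : Submodule K W // finrank K V = u} *
        ∏ i ∈ Finset.range u, (Fintype.card K ^ u - Fintype.card K ^ i) ≤
      ∏ i ∈ Finset.range u, (Fintype.card K ^ finrank K W - Fintype.card K ^ i) := by
  classical
  haveI : Finite (Submodule K W) := Finite.of_injective _ SetLike.coe_injective
  have hspan : ∀ (V : {V : Submodule K W // finrank K V = u})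
      (v : {v : Fin u → V.1 // LinearIndependent K v}),
      span K (Set.range fun i => ((v.1 i : W))) = V.1 := by
    intro V v
    haveI : Nonempty (Fin u) := ⟨⟨0, hu0⟩⟩
    have htop : span K (Set.range v.1) = ⊤ :=
      v.2.span_eq_top_of_card_eq_finrank (by simp [V.2])
    have h1 : (Set.range fun i => ((v.1 i : W))) = V.1.subtype '' Set.range v.1 := by
      rw [← Set.range_comp]; rfl
    rw [h1, ← Submodule.map_span, htop, Submodule.map_top, Submodule.range_subtype]
  -- the injection
  set f : (Σ V : {V : Submodule K W // finrank K V = u},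
      {v : Fin u → V.1 // LinearIndependent K v}) → {v : Fin u → W // LinearIndependent K v} :=
    fun p => ⟨fun i => (p.2.1 i : W), p.2.2.map' p.1.1.subtype (Submodule.ker_subtype _)⟩ with hf
  have hinj : Function.Injective f := by
    rintro ⟨V1, v1⟩ ⟨V2, v2⟩ h
    have hco : (fun i => ((v1.1 i : W))) = fun i => ((v2.1 i : W)) := congrArg Subtype.val h
    have hV : V1 = V2 := Subtype.ext (by rw [← hspan V1 v1, ← hspan V2 v2, hco])
    subst hV
    exact congrArg (Sigma.mk V1)
      (Subtype.ext (funext fun i => Subtype.ext (congrFun hco i)))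
  have hcard : Nat.card (Σ V : {V : Submodule K W // finrank K V = u},
      {v : Fin u → V.1 // LinearIndependent K v}) ≤
      Nat.card {v : Fin u → W // LinearIndependent K v} :=
    Nat.card_le_card_of_injective f hinj
  -- compute card of sigma
  have hfiber : ∀ V : {V : Submodule K W // finrank K V = u},
      Nat.card {v : Fin u → V.1 // LinearIndependent K v} =
        ∏ i ∈ Finset.range u, (Fintype.card K ^ u - Fintype.card K ^ i) := by
    intro V
    rw [card_linearIndependent (le_of_eq V.2.symm), V.2,
      ← Fin.prod_univ_eq_prod_range (fun i => Fintype.card K ^ u - Fintype.card K ^ i) u]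
  by_cases hun : u ≤ finrank K W
  · have hsig : Nat.card (Σ V : {V : Submodule K W // finrank K V = u},
        {v : Fin u → V.1 // LinearIndependent K v}) =
        Nat.card {V : Submodule K W // finrank K V = u} *
          ∏ i ∈ Finset.range u, (Fintype.card K ^ u - Fintype.card K ^ i) := by
      haveI := Fintype.ofFinite {V : Submodule K W // finrank K V = u}
      haveI : ∀ V : {V : Submodule K W // finrank K V = u},
          Fintype {v : Fin u → V.1 // LinearIndependent K v} := fun V => Fintype.ofFinite _
      rw [Nat.card_eq_fintype_card, Fintype.card_sigma]
      rw [Finset.sum_congr rfl (fun V _ => by rw [← Nat.card_eq_fintype_card, hfiber V])]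
      rw [Finset.sum_const, Finset.card_univ, ← Nat.card_eq_fintype_card, smul_eq_mul]
    rw [← hsig]
    rw [card_linearIndependent hun] at hcard
    rw [← Fin.prod_univ_eq_prod_range (fun i => Fintype.card K ^ finrank K W - Fintype.card K ^ i) u]
    exact hcard
  · -- no subspace of dim u
    have : IsEmpty {V : Submodule K W // finrank K V = u} := by
      constructor; rintro ⟨V, hV⟩
      exact hun (hV ▸ Submodule.finrank_le V)
    simp [Nat.card_of_isEmpty]




variable (Fq F : Type*) [Field Fq] [Field F] [Algebra Fq F] {n : ℕ}

noncomputable def iotaMap : (Fin n → Fq) →ₗ[Fq] (Fin n → F) :=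
  LinearMap.pi fun j => (Algebra.linearMap Fq F).comp (LinearMap.proj j)

lemma iotaMap_apply (v : Fin n → Fq) (j : Fin n) : iotaMap Fq F v j = algebraMap Fq F (v j) := rfl

lemma span_iota {s : Set (Fin n → Fq)} {v : Fin n → Fq} (hv : v ∈ span Fq s) :
    iotaMap Fq F v ∈ span F (iotaMap Fq F '' s) := by
  induction hv using Submodule.span_induction with
  | mem x hx => exact subset_span ⟨x, hx, rfl⟩
  | zero => simp
  | add x y _ _ hx hy => rw [map_add]; exact add_mem hx hy
  | smul a x _ hx =>
      rw [_root_.map_smul, ← algebraMap_smul F a (iotaMap Fq F x)]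
      exact Submodule.smul_mem _ _ hx

variable [FiniteDimensional Fq F]

noncomputable def rowSpace (c : Fin n → F) : Submodule Fq (Fin n → Fq) :=
  span Fq (Set.range fun t : Module.Free.ChooseBasisIndex Fq F =>
    fun j => (Module.Free.chooseBasis Fq F).repr (c j) t)

lemma finrank_rowSpace (c : Fin n → F) :
    finrank Fq (rowSpace Fq F c) =
      finrank Fq (span Fq (Set.range c)) := by
  classical
  set B := Module.Free.chooseBasis Fq F with hB
  set M : Matrix (Module.Free.ChooseBasisIndex Fq F) (Fin n) Fq :=
    Matrix.of fun t j => B.repr (c j) t with hM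
  have h1 : rowSpace Fq F c = span Fq (Set.range M.row) := rfl
  rw [h1, ← Matrix.rank_eq_finrank_span_row M, Matrix.rank_eq_finrank_span_cols, Matrix.col]
  have h2 : Mᵀ = fun j => B.equivFun (c j) := by
    funext j t
    simp [hM, Matrix.transpose_apply, Basis.equivFun_apply]
  rw [h2]
  have h3 : (Set.range fun j => B.equivFun (c j)) = ⇑B.equivFun '' Set.range c := by
    rw [← Set.range_comp]; rfl
  rw [h3, Submodule.span_image_linearEquiv]
  exact LinearEquiv.finrank_map_eq B.equivFun _

lemma exists_repr (c : Fin n → F) {u : ℕ} (g' : Fin u → (Fin n → Fq))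
    (hg : rowSpace Fq F c ≤ span Fq (Set.range g')) :
    ∃ y : Fin u → F, ∑ i, y i • iotaMap Fq F (g' i) = c := by
  classical
  set B := Module.Free.chooseBasis Fq F with hB
  have hrow : ∀ t, iotaMap Fq F (fun j => B.repr (c j) t) ∈
      span F (Set.range fun i => iotaMap Fq F (g' i)) := by
    intro t
    have h1 : (fun j => B.repr (c j) t) ∈ span Fq (Set.range g') :=
      hg (subset_span (Set.mem_range_self t))
    have h2 := span_iota Fq F h1
    have h3 : iotaMap Fq F '' Set.range g' = Set.range fun i => iotaMap Fq F (g' i) := by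
      rw [← Set.range_comp]; rfl
    rwa [h3] at h2
  have hsum : c = ∑ t, B t • iotaMap Fq F (fun j => B.repr (c j) t) := by
    funext j
    rw [Finset.sum_apply]
    have : ∀ t, (B t • iotaMap Fq F (fun j' => B.repr (c j') t)) j
        = B.repr (c j) t • B t := by
      intro t
      simp [iotaMap_apply, Algebra.smul_def, mul_comm]
    rw [Finset.sum_congr rfl fun t _ => this t]
    exact (B.sum_repr (c j)).symm
  have hc : c ∈ span F (Set.range fun i => iotaMap Fq F (g' i)) := by
    rw [hsum]
    exact Submodule.sum_mem _ fun t _ => Submodule.smul_mem _ _ (hrow t)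
  rwa [mem_span_range_iff_exists_fun] at hc

lemma span_le_of_repr {c : Fin n → F} {u : ℕ} {g' : Fin u → (Fin n → Fq)} {y : Fin u → F}
    (hc : ∑ i, y i • iotaMap Fq F (g' i) = c) :
    span Fq (Set.range c) ≤ span Fq (Set.range y) := by
  rw [Submodule.span_le]
  rintro _ ⟨j, rfl⟩
  have h1 : c j = ∑ i, (g' i j) • y i := by
    rw [← hc, Finset.sum_apply]
    exact Finset.sum_congr rfl fun i _ => by
      simp [iotaMap_apply, Algebra.smul_def, mul_comm]
  rw [SetLike.mem_coe, h1]
  exact Submodule.sum_mem _ fun i _ => Submodule.smul_mem _ _ (subset_span (Set.mem_range_self i))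

lemma finrank_span_le_of_zero_prefix {u t : ℕ} (z : Fin u → F) (ht : t ≤ u)
    (hz : ∀ i : Fin u, (i : ℕ) < t → z i = 0) :
    finrank Fq (span Fq (Set.range z)) ≤ u - t := by
  classical
  set z2 : Fin (u - t) → F := fun i => z ⟨t + i, by omega⟩ with hz2
  have hsub : Set.range z ⊆ insert 0 (Set.range z2) := by
    rintro _ ⟨i, rfl⟩
    by_cases h : (i : ℕ) < t
    · rw [hz i h]; exact Set.mem_insert _ _
    · refine Set.mem_insert_of_mem _ ⟨⟨(i : ℕ) - t, by omega⟩, ?_⟩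
      show z ⟨t + ((i:ℕ) - t), by omega⟩ = z i
      congr 1
      exact Fin.ext (by simp only [Fin.val_mk]; omega)
  calc finrank Fq (span Fq (Set.range z))
      ≤ finrank Fq (span Fq (insert 0 (Set.range z2))) :=
        Submodule.finrank_mono (span_mono hsub)
    _ = finrank Fq (span Fq (Set.range z2)) := by rw [Submodule.span_insert_zero]
    _ ≤ (Set.range z2).toFinset.card := finrank_span_le_card _
    _ ≤ u - t := by
        rw [Set.toFinset_range]
        exact (Finset.card_image_le).trans (by simp)


end AuxMRD

lemma cast_Aq_nat (q N t : ℕ) (h1 : 1 ≤ q) (h : t ≤ N) :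
    ((∏ i ∈ Finset.range t, (q ^ N - q ^ i) : ℕ) : ℝ) = Aq q N t := by
  rw [Nat.cast_prod, Aq]
  refine Finset.prod_congr rfl fun i hi => ?_
  have hi' : i ≤ N := le_trans (le_of_lt (Finset.mem_range.mp hi)) h
  rw [Nat.cast_sub (Nat.pow_le_pow_right h1 hi')]
  push_cast
  ring

/-- Bound on the rank distribution of MRD codes: for `u ≥ d = n - k + 1`, the number of
codewords of rank `u` is at most `[n choose u]_q · A(m, u - r)` with `r = n - k`. -/
theorem stmt14 (q m n k u : ℕ) (Fq F : Type) [Field Fq] [Fintype Fq] [Field F] [Algebra Fq F]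
    (hq : Fintype.card Fq = q) (hm : Module.finrank Fq F = m)
    (hk : 1 ≤ k) (hkn : k ≤ n) (hnm : n ≤ m)
    (C : Set (Fin n → F)) (hcard : Nat.card C = q ^ (m * k))
    (hMRD : ∀ c ∈ C, ∀ c' ∈ C, c ≠ c' → n - k + 1 ≤ rk Fq (c - c'))
    (hu : n - k + 1 ≤ u) :
    (Nat.card {c : Fin n → F // c ∈ C ∧ rk Fq c = u} : ℝ) ≤
      gaussBinom q n u * Aq q m (u - (n - k)) := by
  classical
  have hq2 : 2 ≤ q := hq ▸ Fintype.one_lt_card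
  haveI : FiniteDimensional Fq F := FiniteDimensional.of_finrank_pos (by omega)
  haveI : Finite F := Module.finite_of_finite Fq
  set r : ℕ := n - k with hr
  have hru : r + 1 ≤ u := hu
  have hAuu_pos : 0 < Aq q u u := by
    refine Finset.prod_pos fun i hi => ?_
    have : (q:ℝ)^i < (q:ℝ)^u :=
      pow_lt_pow_right₀ (by exact_mod_cast (by omega : 1 < q)) (Finset.mem_range.mp hi)
    linarith
  by_cases hun : u ≤ n
  · -- main case
    -- rank of elements: bound set cardinality via injection
    set S := {c : Fin n → F // c ∈ C ∧ rk Fq c = u} with hS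
    set VT := {V : Submodule Fq (Fin n → Fq) // finrank Fq V = u} with hVT
    set WT := {w : Fin (u - r) → F // LinearIndependent Fq w} with hWT
    haveI : Finite (Submodule Fq (Fin n → Fq)) := Finite.of_injective _ SetLike.coe_injective
    -- basis for each subspace
    set g : ∀ V : VT, Basis (Fin u) Fq V.1 := fun V => Module.finBasisOfFinrankEq Fq V.1 V.2
      with hg
    set g' : ∀ V : VT, Fin u → (Fin n → Fq) := fun V i => (g V i : Fin n → Fq) with hg'
    have hspang : ∀ V : VT, span Fq (Set.range (g' V)) = V.1 := by
      intro V
      have h1 : Set.range (g' V) = V.1.subtype '' Set.range (g V) := by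
        rw [← Set.range_comp]; rfl
      rw [h1, ← Submodule.map_span, Basis.span_eq, Submodule.map_top, Submodule.range_subtype]
    set Vmap : S → VT := fun c => ⟨rowSpace Fq F c.1, by
      rw [finrank_rowSpace]; exact c.2.2⟩ with hVmap
    have hy : ∀ c : S, ∃ y : Fin u → F, ∑ i, y i • iotaMap Fq F (g' (Vmap c) i) = c.1 := by
      intro c
      refine exists_repr Fq F c.1 (g' (Vmap c)) ?_
      rw [hspang (Vmap c)]
    set y : ∀ c : S, Fin u → F := fun c => Classical.choose (hy c) with hy'
    have hyc : ∀ c : S, ∑ i, y c i • iotaMap Fq F (g' (Vmap c) i) = c.1 :=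
      fun c => Classical.choose_spec (hy c)
    have hyLI : ∀ c : S, LinearIndependent Fq (y c) := by
      intro c
      have hle := span_le_of_repr Fq F (hyc c)
      have h1 : u ≤ finrank Fq (span Fq (Set.range (y c))) := by
        have := Submodule.finrank_mono (M := F) hle
        rw [show finrank Fq (span Fq (Set.range c.1)) = rk Fq c.1 from rfl, c.2.2] at this
        exact this
      have h2 : finrank Fq (span Fq (Set.range (y c))) ≤ u := by
        refine le_trans (finrank_span_le_card _) ?_
        rw [Set.toFinset_range]
        exact (Finset.card_image_le).trans (by simp)
      rw [linearIndependent_iff_card_eq_finrank_span]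
      rw [Fintype.card_fin]
      exact le_antisymm h1 h2
    have hur : u - r ≤ u := Nat.sub_le _ _
    set Φ : S → VT × WT := fun c =>
      (Vmap c, ⟨fun i => y c (Fin.castLE hur i), (hyLI c).comp _ (Fin.castLE_injective hur)⟩)
      with hΦ
    have hΦinj : Function.Injective Φ := by
      intro c1 c2 h
      have hV : Vmap c1 = Vmap c2 := congrArg Prod.fst h
      have hw : ∀ i : Fin (u - r), y c1 (Fin.castLE hur i) = y c2 (Fin.castLE hur i) := by
        intro i
        have := congrArg Prod.snd h
        exact congrFun (congrArg Subtype.val this) i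
      by_contra hne
      have hne' : c1.1 ≠ c2.1 := fun he => hne (Subtype.ext he)
      have hd := hMRD c1.1 c1.2.1 c2.1 c2.2.1 hne'
      set z : Fin u → F := y c1 - y c2 with hz
      have hzrep : ∑ i, z i • iotaMap Fq F (g' (Vmap c1) i) = c1.1 - c2.1 := by
        have e1 := hyc c1
        have e2 := hyc c2
        rw [← hV] at e2
        rw [← e1, ← e2, ← Finset.sum_sub_distrib]
        exact Finset.sum_congr rfl fun i _ => by rw [hz, Pi.sub_apply, sub_smul]
      have hzz : ∀ i : Fin u, (i : ℕ) < u - r → z i = 0 := by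
        intro i hi
        have h1 : y c1 (Fin.castLE hur ⟨(i:ℕ), hi⟩) = y c2 (Fin.castLE hur ⟨(i:ℕ), hi⟩) :=
          hw ⟨(i:ℕ), hi⟩
        have h2 : Fin.castLE hur (⟨(i:ℕ), hi⟩ : Fin (u - r)) = i := Fin.ext rfl
        rw [h2] at h1
        simp [hz, h1]
      have hrk : rk Fq (c1.1 - c2.1) ≤ r := by
        have hle := span_le_of_repr Fq F hzrep
        refine le_trans (Submodule.finrank_mono (M := F) hle) ?_
        have := finrank_span_le_of_zero_prefix Fq F z hur hzz
        have huu : u - (u - r) = r := by omega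
        rwa [huu] at this
      omega
    haveI : Finite (VT × WT) := inferInstance
    have h1 : Nat.card S ≤ Nat.card (VT × WT) := Nat.card_le_card_of_injective Φ hΦinj
    rw [Nat.card_prod] at h1
    -- card of WT
    have hWcard : Nat.card WT = ∏ i ∈ Finset.range (u - r), (q ^ m - q ^ i) := by
      rw [hWT, card_linearIndependent (by rw [hm]; omega)]
      rw [← Fin.prod_univ_eq_prod_range (fun i => q ^ m - q ^ i) (u - r)]
      rw [hq, hm]
    have hfr : finrank Fq (Fin n → Fq) = n := by
      rw [Module.finrank_pi]; exact Fintype.card_fin n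
    have hVcard := card_subspaces_mul_le (K := Fq) (W := Fin n → Fq) u (by omega)
    rw [hfr, hq] at hVcard
    -- real arithmetic
    have hcastu : ((∏ i ∈ Finset.range u, (q ^ u - q ^ i) : ℕ) : ℝ) = Aq q u u :=
      cast_Aq_nat q u u (by omega) le_rfl
    have hcastn : ((∏ i ∈ Finset.range u, (q ^ n - q ^ i) : ℕ) : ℝ) = Aq q n u :=
      cast_Aq_nat q n u (by omega) hun
    have hcastm : ((∏ i ∈ Finset.range (u - r), (q ^ m - q ^ i) : ℕ) : ℝ) = Aq q m (u - r) :=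
      cast_Aq_nat q m (u - r) (by omega) (by omega)
    have hNV : (Nat.card VT : ℝ) ≤ gaussBinom q n u := by
      rw [gaussBinom, le_div_iff₀ hAuu_pos]
      rw [← hcastu, ← hcastn]
      exact_mod_cast hVcard
    calc (Nat.card S : ℝ) ≤ (Nat.card VT : ℝ) * (Nat.card WT : ℝ) := by exact_mod_cast h1
      _ ≤ gaussBinom q n u * Aq q m (u - r) := by
          rw [hWcard, hcastm]
          have hnn : 0 ≤ Aq q m (u - r) := by rw [← hcastm]; positivity
          exact mul_le_mul_of_nonneg_right hNV (by rw [← hcastm] at hnn ⊢; exact hnn)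
  · -- u > n : left side empty, right side zero
    have hempty : IsEmpty {c : Fin n → F // c ∈ C ∧ rk Fq c = u} := by
      constructor
      rintro ⟨c, hc, hrk⟩
      have h1 : rk Fq c ≤ n := by
        refine le_trans (finrank_span_le_card _) ?_
        rw [Set.toFinset_range]
        exact (Finset.card_image_le).trans (by simp)
      omega
    have hAqn : Aq q n u = 0 := by
      refine Finset.prod_eq_zero (Finset.mem_range.mpr (by omega : n < u)) ?_
      ring
    rw [Nat.card_of_isEmpty]
    rw [gaussBinom, hAqn]
    simp
end

section
/- Let C ⊆ GF(q^m)^n be an MRD code with n ≤ m, |C| = q^{mk}, redundancy r = n-k, minimum rank distance d = n-k+1, and error-correction capability t = ⌊(d-1)/2⌋. For u ≥ d, the number D_u of vectors of rank u within rank distance t of some codeword satisfies D_u ≤ [n choose u]_q · A(m, u-r) · V_t, where V_t = ∑_{i=0}^{t} [n choose i]_q A(m,i). -/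
/-! ### Auxiliary counting lemmas -/

namespace MRDaux

open Finset Module Submodule

set_option linter.unusedSectionVars false

lemma natCard_sigma {ι : Type*} [Fintype ι] (f : ι → Type*) [∀ i, Finite (f i)] :
    Nat.card (Σ i, f i) = ∑ i, Nat.card (f i) := by
  letI : ∀ i, Fintype (f i) := fun i => Fintype.ofFinite _
  simp [Nat.card_eq_fintype_card, Fintype.card_sigma]

variable {Fq : Type*} [Field Fq] [Fintype Fq]

/-- number of linearly independent `j`-tuples in a finite space over `Fq`. -/
lemma card_indep_tuples (V : Type*) [AddCommGroup V] [Module Fq V] [Module.Finite Fq V] :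
    ∀ j, j ≤ Module.finrank Fq V →
      Nat.card {w : Fin j → V // LinearIndependent Fq w}
        = ∏ i ∈ Finset.range j, (Fintype.card Fq ^ Module.finrank Fq V - Fintype.card Fq ^ i) := by
  have hVfin : Finite V := Module.finite_of_finite Fq
  intro j hj
  induction j with
  | zero =>
      simp only [Finset.range_zero, Finset.prod_empty]
      have : Unique {w : Fin 0 → V // LinearIndependent Fq w} := by
        refine ⟨⟨⟨fun i => i.elim0, linearIndependent_empty_type⟩⟩, ?_⟩
        rintro ⟨w, hw⟩
        ext i
        exact i.elim0
      exact Nat.card_unique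
  | succ j ih =>
      have hj' : j ≤ Module.finrank Fq V := by omega
      classical
      let e : {w : Fin (j+1) → V // LinearIndependent Fq w} ≃
          Σ p : {w : Fin j → V // LinearIndependent Fq w},
            {v : V // v ∉ Submodule.span Fq (Set.range p.1)} := by
        refine Equiv.ofBijective (fun w =>
          ⟨⟨Fin.init w.1, ?_⟩, ⟨w.1 (Fin.last j), ?_⟩⟩) ⟨?_, ?_⟩
        · have := w.2
          rw [← Fin.snoc_init_self w.1, linearIndependent_fin_snoc] at this
          exact this.1
        · have := w.2
          rw [← Fin.snoc_init_self w.1, linearIndependent_fin_snoc] at this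
          exact this.2
        · rintro ⟨w, hw⟩ ⟨w', hw'⟩ h
          simp only [Sigma.mk.inj_iff, Subtype.mk.injEq] at h
          have hval : w (Fin.last j) = w' (Fin.last j) := by
            have h2 := h.2
            rw [Subtype.heq_iff_coe_eq (fun x => by rw [h.1])] at h2
            exact h2
          apply Subtype.ext
          show w = w'
          rw [← Fin.snoc_init_self w, ← Fin.snoc_init_self w', h.1, hval]
        · rintro ⟨⟨w, hw⟩, ⟨v, hv⟩⟩
          refine ⟨⟨Fin.snoc w v, ?_⟩, ?_⟩
          · rw [linearIndependent_fin_snoc]; exact ⟨hw, hv⟩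
          · refine Sigma.ext ?_ ?_
            · apply Subtype.ext; simp
            · rw [Subtype.heq_iff_coe_eq (fun x => by simp)]; simp
      rw [Nat.card_congr e]
      letI : Fintype {w : Fin j → V // LinearIndependent Fq w} := Fintype.ofFinite _
      rw [natCard_sigma]
      have hfib : ∀ p : {w : Fin j → V // LinearIndependent Fq w},
          Nat.card {v : V // v ∉ Submodule.span Fq (Set.range p.1)}
            = Fintype.card Fq ^ Module.finrank Fq V - Fintype.card Fq ^ j := by
        intro p
        letI : Fintype V := Fintype.ofFinite _
        have hcardV : Fintype.card V = Fintype.card Fq ^ Module.finrank Fq V :=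
          card_eq_pow_finrank
        have hspan : Module.finrank Fq (Submodule.span Fq (Set.range p.1)) = j := by
          rw [finrank_span_eq_card p.2, Fintype.card_fin]
        have hcardS : Nat.card {v : V // v ∈ Submodule.span Fq (Set.range p.1)}
            = Fintype.card Fq ^ j := by
          rw [Nat.card_eq_fintype_card]
          have : Fintype.card {v : V // v ∈ Submodule.span Fq (Set.range p.1)}
              = Fintype.card Fq ^ Module.finrank Fq (Submodule.span Fq (Set.range p.1)) :=
            card_eq_pow_finrank
          rw [this, hspan]
        rw [Nat.card_eq_fintype_card, Fintype.card_subtype_compl, ← hcardV,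
          ← Nat.card_eq_fintype_card, ← Nat.card_eq_fintype_card, hcardS]
      rw [Finset.sum_congr rfl (fun p _ => hfib p), Finset.sum_const, Finset.card_univ,
        ← Nat.card_eq_fintype_card, ih hj', Finset.prod_range_succ, smul_eq_mul, mul_comm]

lemma card_subspaces_mul (V : Type*) [AddCommGroup V] [Module Fq V] [Module.Finite Fq V]
    (j : ℕ) (hj : j ≤ Module.finrank Fq V) :
    Nat.card {K : Submodule Fq V // Module.finrank Fq K = j}
        * ∏ i ∈ Finset.range j, (Fintype.card Fq ^ j - Fintype.card Fq ^ i)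
      = ∏ i ∈ Finset.range j, (Fintype.card Fq ^ Module.finrank Fq V - Fintype.card Fq ^ i) := by
  classical
  have hVfin : Finite V := Module.finite_of_finite Fq
  have hSubFin : Finite (Submodule Fq V) :=
    Finite.of_injective (fun K => (K : Set V)) (fun K K' h => SetLike.ext' h)
  rcases Nat.eq_zero_or_pos j with hj0 | hjpos
  · subst hj0
    simp only [Finset.range_zero, Finset.prod_empty, mul_one]
    have : Unique {K : Submodule Fq V // Module.finrank Fq K = 0} := by
      refine ⟨⟨⟨⊥, finrank_bot Fq V⟩⟩, ?_⟩
      rintro ⟨K, hK⟩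
      apply Subtype.ext
      show K = ⊥
      exact (Submodule.finrank_eq_zero).mp hK
    exact Nat.card_unique
  · have : Nonempty (Fin j) := ⟨⟨0, hjpos⟩⟩
    set f : {w : Fin j → V // LinearIndependent Fq w} → {K : Submodule Fq V // Module.finrank Fq K = j} :=
      fun w => ⟨Submodule.span Fq (Set.range w.1), by
        rw [finrank_span_eq_card w.2, Fintype.card_fin]⟩ with hf
    letI : Fintype {K : Submodule Fq V // Module.finrank Fq K = j} := Fintype.ofFinite _
    have key : Nat.card {w : Fin j → V // LinearIndependent Fq w}
        = ∑ K : {K : Submodule Fq V // Module.finrank Fq K = j}, Nat.card {p // f p = K} := by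
      rw [← Nat.card_congr (Equiv.sigmaFiberEquiv f), natCard_sigma]
    have hfib : ∀ K : {K : Submodule Fq V // Module.finrank Fq K = j},
        Nat.card {p // f p = K}
          = ∏ i ∈ Finset.range j, (Fintype.card Fq ^ j - Fintype.card Fq ^ i) := by
      intro K
      have hKfr : Module.finrank Fq K.1 = j := K.2
      have hKle : j ≤ Module.finrank Fq K.1 := le_of_eq hKfr.symm
      have e : {p // f p = K} ≃ {w : Fin j → K.1 // LinearIndependent Fq w} := by
        refine Equiv.ofBijective (fun p =>
          ⟨fun i => ⟨p.1.1 i, ?_⟩, ?_⟩) ⟨?_, ?_⟩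
        · have hspan : Submodule.span Fq (Set.range p.1.1) = K.1 :=
            congrArg Subtype.val p.2
          exact hspan ▸ Submodule.subset_span (Set.mem_range_self i)
        · apply LinearIndependent.of_comp K.1.subtype
          exact p.1.2
        · rintro ⟨⟨w, hw⟩, hK1⟩ ⟨⟨w', hw'⟩, hK2⟩ h
          apply Subtype.ext; apply Subtype.ext
          funext i
          exact congrArg Subtype.val (congrFun (congrArg Subtype.val h) i)
        · rintro ⟨wk, hwk⟩
          have hindep : LinearIndependent Fq (K.1.subtype ∘ wk) :=
            hwk.map' K.1.subtype (Submodule.ker_subtype K.1)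
          have hspan : Submodule.span Fq (Set.range (K.1.subtype ∘ wk)) = K.1 := by
            rw [Set.range_comp, Submodule.span_image,
              hwk.span_eq_top_of_card_eq_finrank (by rw [Fintype.card_fin, hKfr]),
              Submodule.map_top, Submodule.range_subtype]
          refine ⟨⟨⟨K.1.subtype ∘ wk, hindep⟩, ?_⟩, ?_⟩
          · apply Subtype.ext
            exact hspan
          · apply Subtype.ext
            funext i
            apply Subtype.ext
            rfl
      rw [Nat.card_congr e, card_indep_tuples K.1 j hKle, hKfr]
    rw [Finset.sum_congr rfl (fun K _ => hfib K), Finset.sum_const, Finset.card_univ,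
      smul_eq_mul, ← Nat.card_eq_fintype_card] at key
    rw [← key, card_indep_tuples V j hj]

/-! ### Real-number identities for `Aq` -/

lemma aq_factor (q d j : ℕ) (hj : j ≤ d) :
    Aq q d j = (∏ i ∈ range j, (q:ℝ)^i) * ∏ i ∈ range j, ((q:ℝ)^(d-j+1+i) - 1) := by
  unfold Aq
  have h1 : ∀ i ∈ range j, (q:ℝ)^d - (q:ℝ)^i = (q:ℝ)^i * ((q:ℝ)^(d-i) - 1) := by
    intro i hi
    rw [mul_sub, mul_one, ← pow_add]
    congr 2
    have := mem_range.mp hi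
    omega
  rw [Finset.prod_congr rfl h1, Finset.prod_mul_distrib]
  congr 1
  rw [← Finset.prod_range_reflect (fun i => (q:ℝ)^(d-j+1+i) - 1) j]
  apply Finset.prod_congr rfl
  intro i hi
  have := mem_range.mp hi
  congr 2
  omega

lemma prod_pos_q (q : ℕ) (hq : 2 ≤ q) (s : ℕ) : (0:ℝ) < ∏ i ∈ range s, ((q:ℝ)^(1+i) - 1) := by
  apply Finset.prod_pos
  intro i _
  have hq' : (2:ℝ) ≤ (q:ℝ) := by exact_mod_cast hq
  have : (2:ℝ) ≤ (q:ℝ)^(1+i) := le_trans hq' (by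
    calc (q:ℝ) = (q:ℝ)^1 := (pow_one _).symm
    _ ≤ (q:ℝ)^(1+i) := pow_le_pow_right₀ (by linarith) (by omega))
  linarith

lemma aq_pos (q d j : ℕ) (hq : 2 ≤ q) (hj : j ≤ d) : (0:ℝ) < Aq q d j := by
  unfold Aq
  apply Finset.prod_pos
  intro i hi
  have hi' := mem_range.mp hi
  have hq' : (1:ℝ) < (q:ℝ) := by exact_mod_cast hq
  have : (q:ℝ)^i < (q:ℝ)^d := pow_lt_pow_right₀ hq' (by omega)
  linarith

lemma gauss_symm (q n u : ℕ) (hq : 2 ≤ q) (hu : u ≤ n) :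
    Aq q n (n-u) / Aq q (n-u) (n-u) = Aq q n u / Aq q u u := by
  have hq2 : (2:ℝ) ≤ (q:ℝ) := by exact_mod_cast hq
  have hQ : ∀ s : ℕ, (0:ℝ) < ∏ i ∈ range s, (q:ℝ)^i := by
    intro s; apply Finset.prod_pos; intro i _; positivity
  rw [aq_factor q n (n-u) (by omega), aq_factor q (n-u) (n-u) le_rfl,
    aq_factor q n u hu, aq_factor q u u le_rfl]
  have e1 : n - (n-u) + 1 = u + 1 := by omega
  have e2 : (n-u) - (n-u) + 1 = 1 := by omega
  have e4 : u - u + 1 = 1 := by omega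
  rw [e1, e2, e4]
  rw [mul_div_mul_left _ _ (ne_of_gt (hQ (n-u))), mul_div_mul_left _ _ (ne_of_gt (hQ u))]
  rw [div_eq_div_iff (ne_of_gt (prod_pos_q q hq (n-u))) (ne_of_gt (prod_pos_q q hq u))]
  have key1 : (∏ i ∈ range (n-u), ((q:ℝ)^(u+1+i) - 1)) * ∏ i ∈ range u, ((q:ℝ)^(1+i) - 1)
      = ∏ i ∈ range n, ((q:ℝ)^(1+i) - 1) := by
    have h := Finset.prod_range_add (fun i => (q:ℝ)^(1+i) - 1) u (n-u)
    rw [show u + (n-u) = n by omega] at h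
    rw [h, mul_comm]
    congr 1
    apply Finset.prod_congr rfl
    intro i _
    congr 2
    omega
  have key2 : (∏ i ∈ range u, ((q:ℝ)^(n-u+1+i) - 1)) * ∏ i ∈ range (n-u), ((q:ℝ)^(1+i) - 1)
      = ∏ i ∈ range n, ((q:ℝ)^(1+i) - 1) := by
    have h := Finset.prod_range_add (fun i => (q:ℝ)^(1+i) - 1) (n-u) u
    rw [show (n-u) + u = n by omega] at h
    rw [h, mul_comm]
    congr 1
    apply Finset.prod_congr rfl
    intro i _
    congr 2
    omega
  rw [key1, key2]

lemma aqN_cast (q d j : ℕ) (hq : 1 ≤ q) (hj : j ≤ d) :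
    ((∏ i ∈ range j, (q^d - q^i) : ℕ) : ℝ) = Aq q d j := by
  rw [Nat.cast_prod]
  unfold Aq
  apply Finset.prod_congr rfl
  intro i hi
  have hi' := mem_range.mp hi
  have h1 : q^i ≤ q^d := Nat.pow_le_pow_right hq (by omega)
  rw [Nat.cast_sub h1, Nat.cast_pow, Nat.cast_pow]

/-! ### The key injection bound -/

section Inj
variable {Fq F : Type*} [Field Fq] [Fintype Fq] [Field F] [Algebra Fq F] [FiniteDimensional Fq F]
variable {n : ℕ}

/-- The linear map sending coefficient vectors to combinations of entries of `x`. -/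
noncomputable def ellMap (Fq : Type*) {F : Type*} [Field Fq] [Fintype Fq] [Field F] [Algebra Fq F]
    {n : ℕ} (x : Fin n → F) : (Fin n → Fq) →ₗ[Fq] F :=
  Fintype.linearCombination Fq x

lemma ellMap_range (x : Fin n → F) :
    LinearMap.range (ellMap Fq x) = Submodule.span Fq (Set.range x) :=
  Fintype.range_linearCombination Fq x

lemma ellMap_sub (x y : Fin n → F) (v : Fin n → Fq) :
    ellMap Fq (x - y) v = ellMap Fq x v - ellMap Fq y v := by
  simp [ellMap, Fintype.linearCombination_apply, smul_sub, Finset.sum_sub_distrib]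

lemma rk_eq_range (x : Fin n → F) :
    rk Fq x = Module.finrank Fq (LinearMap.range (ellMap Fq x)) := by
  rw [ellMap_range]; rfl

lemma rk_le_n (x : Fin n → F) : rk Fq x ≤ n := by
  rw [rk_eq_range]
  calc Module.finrank Fq (LinearMap.range (ellMap Fq x)) ≤ Module.finrank Fq (Fin n → Fq) :=
        LinearMap.finrank_range_le _
    _ = n := by rw [Module.finrank_pi]; exact Fintype.card_fin n

lemma rk_zero_imp (x : Fin n → F) (h : rk Fq x = 0) : x = 0 := by
  unfold rk at h
  have hbot : Submodule.span Fq (Set.range x) = ⊥ := (Submodule.finrank_eq_zero).mp h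
  funext j
  have : x j ∈ Submodule.span Fq (Set.range x) := Submodule.subset_span (Set.mem_range_self j)
  rw [hbot] at this
  simpa using this

lemma inj_bound (ρ s : ℕ) (hs : s ≤ ρ) (hρ : ρ ≤ n)
    (P : (Fin n → F) → Prop) (E : Type*) [Finite E]
    (ce : {x : Fin n → F // P x ∧ rk Fq x = ρ} → E)
    (hsep : ∀ x y : {x : Fin n → F // P x ∧ rk Fq x = ρ}, ce x = ce y →
      rk Fq (x.1 - y.1) ≤ ρ - s → x = y) :
    Nat.card {x : Fin n → F // P x ∧ rk Fq x = ρ} ≤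
      Nat.card E * Nat.card {K : Submodule Fq (Fin n → Fq) // Module.finrank Fq K = n - ρ}
        * Nat.card {z : Fin s → F // LinearIndependent Fq z} := by
  classical
  have hFfin : Finite F := Module.finite_of_finite Fq
  have hfrV : Module.finrank Fq (Fin n → Fq) = n := by
    rw [Module.finrank_pi]; exact Fintype.card_fin n
  have hchoice : ∀ K : Submodule Fq (Fin n → Fq), Module.finrank Fq K = n - ρ →
      ∃ w : Fin ρ → (Fin n → Fq), ∃ W : Submodule Fq (Fin n → Fq),
        IsCompl K W ∧ Submodule.span Fq (Set.range w) = W ∧ LinearIndependent Fq w := by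
    intro K hK
    obtain ⟨W, hW⟩ := Submodule.exists_isCompl K
    have hWfr : Module.finrank Fq W = ρ := by
      have h1 := Submodule.finrank_add_eq_of_isCompl hW
      rw [hK, hfrV] at h1
      omega
    let b := Module.finBasisOfFinrankEq Fq W hWfr
    refine ⟨fun i => (b i : Fin n → Fq), W, hW, ?_, ?_⟩
    · rw [show (fun i => ((b i : W) : Fin n → Fq)) = W.subtype ∘ b from rfl, Set.range_comp,
        Submodule.span_image, b.span_eq, Submodule.map_top, Submodule.range_subtype]
    · exact b.linearIndependent.map' W.subtype (Submodule.ker_subtype W)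
  let SubT := {K : Submodule Fq (Fin n → Fq) // Module.finrank Fq K = n - ρ}
  let wfun : SubT → Fin ρ → (Fin n → Fq) := fun K => (hchoice K.1 K.2).choose
  have wspec : ∀ K : SubT, ∃ W : Submodule Fq (Fin n → Fq),
      IsCompl K.1 W ∧ Submodule.span Fq (Set.range (wfun K)) = W ∧ LinearIndependent Fq (wfun K) :=
    fun K => (hchoice K.1 K.2).choose_spec
  let dom := {x : Fin n → F // P x ∧ rk Fq x = ρ}
  have hker : ∀ x : dom, Module.finrank Fq (LinearMap.ker (ellMap Fq x.1)) = n - ρ := by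
    intro x
    have h1 := LinearMap.finrank_range_add_finrank_ker (ellMap Fq x.1)
    rw [hfrV, ← rk_eq_range, x.2.2] at h1
    omega
  let Kx : dom → SubT := fun x => ⟨LinearMap.ker (ellMap Fq x.1), hker x⟩
  have hfull : ∀ x : dom, LinearIndependent Fq (fun i : Fin ρ => ellMap Fq x.1 (wfun (Kx x) i)) := by
    intro x
    obtain ⟨W, hWc, hWspan, hWindep⟩ := wspec (Kx x)
    rw [Fintype.linearIndependent_iff]
    intro g hg
    have hv : ellMap Fq x.1 (∑ i, g i • wfun (Kx x) i) = 0 := by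
      rw [map_sum]
      simpa [map_smul] using hg
    have hvK : (∑ i, g i • wfun (Kx x) i) ∈ (Kx x).1 := hv
    have hvW : (∑ i, g i • wfun (Kx x) i) ∈ W := by
      rw [← hWspan]
      exact Submodule.sum_mem _ (fun i _ => Submodule.smul_mem _ _
        (Submodule.subset_span (Set.mem_range_self i)))
    have hv0 : (∑ i, g i • wfun (Kx x) i) = 0 := by
      exact (Submodule.disjoint_def.mp hWc.disjoint) _ hvK hvW
    exact Fintype.linearIndependent_iff.mp hWindep g hv0
  let Φ : dom → E × SubT × {z : Fin s → F // LinearIndependent Fq z} := fun x =>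
    (ce x, Kx x, ⟨fun i => ellMap Fq x.1 (wfun (Kx x) (Fin.castLE hs i)),
      (hfull x).comp (Fin.castLE hs) (Fin.castLE_injective hs)⟩)
  have hΦinj : Function.Injective Φ := by
    intro x y h
    have h1 : ce x = ce y := congrArg Prod.fst h
    have h2 : Kx x = Kx y := congrArg (Prod.fst ∘ Prod.snd) h
    have h3 : ∀ i : Fin s, ellMap Fq x.1 (wfun (Kx x) (Fin.castLE hs i))
        = ellMap Fq y.1 (wfun (Kx y) (Fin.castLE hs i)) :=
      fun i => congrFun (congrArg (Subtype.val ∘ Prod.snd ∘ Prod.snd) h) i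
    rw [← h2] at h3
    apply hsep x y h1
    obtain ⟨W, hWc, hWspan, hWindep⟩ := wspec (Kx x)
    have hKy : LinearMap.ker (ellMap Fq y.1) = (Kx x).1 := (congrArg Subtype.val h2).symm
    set w := wfun (Kx x) with hw
    set T := Submodule.span Fq (Set.range (w ∘ Fin.castLE hs)) with hT
    have hsub : (Kx x).1 ⊔ T ≤ LinearMap.ker (ellMap Fq (x.1 - y.1)) := by
      apply sup_le
      · intro v hv
        have hvx : ellMap Fq x.1 v = 0 := hv
        have hvy : ellMap Fq y.1 v = 0 := by rw [← LinearMap.mem_ker, hKy]; exact hv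
        simp [LinearMap.mem_ker, ellMap_sub, hvx, hvy]
      · rw [hT, Submodule.span_le]
        rintro v ⟨i, rfl⟩
        simp only [SetLike.mem_coe, LinearMap.mem_ker, Function.comp_apply]
        rw [ellMap_sub, h3 i, sub_self]
    have hTindep : LinearIndependent Fq (w ∘ Fin.castLE hs) :=
      hWindep.comp (Fin.castLE hs) (Fin.castLE_injective hs)
    have hTfr : Module.finrank Fq T = s := by
      rw [hT, finrank_span_eq_card hTindep, Fintype.card_fin]
    have hTW : T ≤ W := by
      rw [hT, ← hWspan]
      apply Submodule.span_mono
      rintro v ⟨i, rfl⟩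
      exact Set.mem_range_self _
    have hinf : (Kx x).1 ⊓ T = ⊥ := by
      apply le_bot_iff.mp
      intro v hv
      have h0 : v = 0 := (Submodule.disjoint_def.mp hWc.disjoint) v
        (Submodule.mem_inf.mp hv).1 (hTW (Submodule.mem_inf.mp hv).2)
      simp [h0]
    have hsupfr : Module.finrank Fq ((Kx x).1 ⊔ T : Submodule Fq (Fin n → Fq)) = (n - ρ) + s := by
      have h4 := Submodule.finrank_sup_add_finrank_inf_eq (Kx x).1 T
      rw [hinf, hTfr, (Kx x).2] at h4
      simpa using h4
    have hkerge : (n - ρ) + s ≤ Module.finrank Fq (LinearMap.ker (ellMap Fq (x.1 - y.1))) := by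
      rw [← hsupfr]
      exact Submodule.finrank_mono hsub
    have h5 := LinearMap.finrank_range_add_finrank_ker (ellMap Fq (x.1 - y.1))
    rw [hfrV, ← rk_eq_range] at h5
    omega
  have hSubFin : Finite (Submodule Fq (Fin n → Fq)) :=
    Finite.of_injective (fun K => (K : Set (Fin n → Fq))) (fun K K' h => SetLike.ext' h)
  calc Nat.card dom ≤ Nat.card (E × SubT × {z : Fin s → F // LinearIndependent Fq z}) :=
        Nat.card_le_card_of_injective Φ hΦinj
    _ = Nat.card E * Nat.card SubT * Nat.card {z : Fin s → F // LinearIndependent Fq z} := by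
        rw [Nat.card_prod, Nat.card_prod, mul_assoc]

end Inj


lemma card_subspaces_real {Fq : Type*} [Field Fq] [Fintype Fq] (q n ρ : ℕ)
    (hqc : Fintype.card Fq = q) (hq2 : 2 ≤ q) (hρ : ρ ≤ n) :
    (Nat.card {K : Submodule Fq (Fin n → Fq) // Module.finrank Fq K = n - ρ} : ℝ)
      = gaussBinom q n ρ := by
  have hfrV : Module.finrank Fq (Fin n → Fq) = n := by
    rw [Module.finrank_pi]; exact Fintype.card_fin n
  have h := card_subspaces_mul (Fq := Fq) (Fin n → Fq) (n - ρ) (by rw [hfrV]; omega)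
  rw [hfrV, hqc] at h
  have hcast := congrArg (fun x : ℕ => (x : ℝ)) h
  simp only [Nat.cast_mul] at hcast
  rw [aqN_cast q (n-ρ) (n-ρ) (by omega) le_rfl, aqN_cast q n (n-ρ) (by omega) (by omega)] at hcast
  have hpos : (0:ℝ) < Aq q (n-ρ) (n-ρ) := aq_pos q (n-ρ) (n-ρ) hq2 le_rfl
  have : (Nat.card {K : Submodule Fq (Fin n → Fq) // Module.finrank Fq K = n - ρ} : ℝ)
      = Aq q n (n-ρ) / Aq q (n-ρ) (n-ρ) := by
    rw [eq_div_iff (ne_of_gt hpos)]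
    exact hcast
  rw [this, gauss_symm q n ρ hq2 hρ]
  rfl

lemma card_indep_real {Fq F : Type*} [Field Fq] [Fintype Fq] [Field F] [Algebra Fq F]
    [FiniteDimensional Fq F] (q m s : ℕ)
    (hqc : Fintype.card Fq = q) (hq1 : 1 ≤ q) (hm : Module.finrank Fq F = m) (hs : s ≤ m) :
    (Nat.card {z : Fin s → F // LinearIndependent Fq z} : ℝ) = Aq q m s := by
  have h := card_indep_tuples (Fq := Fq) F s (by rw [hm]; exact hs)
  rw [hm, hqc] at h
  rw [h, aqN_cast q m s hq1 hs]

end MRDaux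

/-- For an MRD code with redundancy `r = n - k`, minimum rank distance `d = n - k + 1` and
`t = ⌊(d-1)/2⌋`, and `u ≥ d`, the number of decodable vectors of rank `u` satisfies
`D_u ≤ [n choose u]_q · A(m, u - r) · V_t` where `V_t = ∑_{i=0}^t [n choose i]_q A(m,i)`. -/
theorem stmt18 (q m n k u : ℕ) (Fq F : Type) [Field Fq] [Fintype Fq] [Field F] [Algebra Fq F]
    (hq : Fintype.card Fq = q) (hm : Module.finrank Fq F = m)
    (hk : 1 ≤ k) (hkn : k ≤ n) (hnm : n ≤ m)
    (C : Set (Fin n → F)) (h0 : 0 ∈ C) (hcard : Nat.card C = q ^ (m * k))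
    (hMRD : ∀ c ∈ C, ∀ c' ∈ C, c ≠ c' → n - k + 1 ≤ rk Fq (c - c'))
    (t : ℕ) (hT : t = (n - k) / 2) (hu : n - k + 1 ≤ u) :
    (Nat.card {x : Fin n → F // rk Fq x = u ∧ ∃ c ∈ C, rk Fq (x - c) ≤ t} : ℝ) ≤
      gaussBinom q n u * Aq q m (u - (n - k)) *
        (∑ i ∈ Finset.range (t + 1), gaussBinom q n i * Aq q m i) := by
  classical
  have hq2 : 2 ≤ q := by rw [← hq]; exact Fintype.one_lt_card
  have hm1 : 0 < m := by omega
  have hfd : FiniteDimensional Fq F := FiniteDimensional.of_finrank_pos (by rw [hm]; omega)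
  have hFfin : Finite F := Module.finite_of_finite Fq
  by_cases hun : u ≤ n
  · -- main case
    have hrle : n - k + 1 ≤ u := hu
    have hsu : u - (n - k) ≤ u := by omega
    have htn : t ≤ n := by omega
    -- the decodable set with predicate order swapped
    have hcongr : Nat.card {x : Fin n → F // rk Fq x = u ∧ ∃ c ∈ C, rk Fq (x - c) ≤ t}
        = Nat.card {x : Fin n → F // (∃ c ∈ C, rk Fq (x - c) ≤ t) ∧ rk Fq x = u} :=
      Nat.card_congr (Equiv.subtypeEquivRight (fun x => and_comm))
    -- the error ball type
    have hE : Finite {e : Fin n → F // rk Fq e ≤ t} := Subtype.finite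
    let E := {e : Fin n → F // rk Fq e ≤ t}
    let ce : {x : Fin n → F // (∃ c ∈ C, rk Fq (x - c) ≤ t) ∧ rk Fq x = u} → E := fun x =>
      ⟨x.1 - x.2.1.choose, x.2.1.choose_spec.2⟩
    have hsep : ∀ x y : {x : Fin n → F // (∃ c ∈ C, rk Fq (x - c) ≤ t) ∧ rk Fq x = u},
        ce x = ce y → rk Fq (x.1 - y.1) ≤ u - (u - (n - k)) → x = y := by
      intro x y h1 h2
      by_contra hne
      have hxy : x.1 ≠ y.1 := fun hh => hne (Subtype.ext hh)
      have hcx := x.2.1.choose_spec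
      have hcy := y.2.1.choose_spec
      have he : x.1 - x.2.1.choose = y.1 - y.2.1.choose := congrArg Subtype.val h1
      have hdd : x.1 - y.1 = x.2.1.choose - y.2.1.choose := sub_eq_sub_iff_sub_eq_sub.mp he
      have hcc : x.2.1.choose ≠ y.2.1.choose := by
        intro hh
        apply hxy
        rw [hh] at he
        exact sub_left_injective he
      have hdist := hMRD _ hcx.1 _ hcy.1 hcc
      rw [← hdd] at hdist
      have hruu : u - (u - (n - k)) = n - k := by omega
      omega
    have hmain := MRDaux.inj_bound (Fq := Fq) u (u - (n - k)) hsu hun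
      (fun x => ∃ c ∈ C, rk Fq (x - c) ≤ t) E ce hsep
    -- per-rank-level bound
    have hlevel : ∀ i, i ≤ n → Nat.card {x : Fin n → F // rk Fq x = i} ≤
        Nat.card {K : Submodule Fq (Fin n → Fq) // Module.finrank Fq K = n - i}
          * Nat.card {z : Fin i → F // LinearIndependent Fq z} := by
      intro i hin
      have hsepi : ∀ x y : {x : Fin n → F // (fun _ => True) x ∧ rk Fq x = i},
          (fun _ => PUnit.unit.{1}) x = (fun _ => PUnit.unit.{1}) y → rk Fq (x.1 - y.1) ≤ i - i → x = y := by
        intro x y _ h2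
        have h3 : rk Fq (x.1 - y.1) = 0 := by omega
        have h4 := MRDaux.rk_zero_imp (Fq := Fq) _ h3
        exact Subtype.ext (sub_eq_zero.mp h4)
      have h := MRDaux.inj_bound (Fq := Fq) i i le_rfl hin (fun _ => True) PUnit.{1}
        (fun _ => PUnit.unit.{1}) hsepi
      have hone : Nat.card PUnit.{1} = 1 := Nat.card_unique
      rw [hone, one_mul] at h
      calc Nat.card {x : Fin n → F // rk Fq x = i}
          = Nat.card {x : Fin n → F // (fun _ => True) x ∧ rk Fq x = i} :=
            Nat.card_congr (Equiv.subtypeEquivRight (fun x => by simp))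
        _ ≤ _ := h
    -- decompose E by rank
    let fE : E → Fin (t+1) := fun e => ⟨rk Fq e.1, by have := e.2; omega⟩
    have hEdecomp : Nat.card E = ∑ i : Fin (t+1), Nat.card {e : E // fE e = i} := by
      rw [← Nat.card_congr (Equiv.sigmaFiberEquiv fE), MRDaux.natCard_sigma]
    have hEfib : ∀ i : Fin (t+1), Nat.card {e : E // fE e = i}
        ≤ Nat.card {x : Fin n → F // rk Fq x = i.1} := by
      intro i
      have : Finite {x : Fin n → F // rk Fq x = i.1} := Subtype.finite
      apply Nat.card_le_card_of_injective
        (fun p : {e : E // fE e = i} => (⟨p.1.1, congrArg Fin.val p.2⟩ : {x : Fin n → F // rk Fq x = i.1}))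
      intro a b h
      have h' := congrArg (Subtype.val : {x : Fin n → F // rk Fq x = i.1} → (Fin n → F)) h
      exact Subtype.ext (Subtype.ext h')
    -- real-number bounds
    have hSu : (Nat.card {K : Submodule Fq (Fin n → Fq) // Module.finrank Fq K = n - u} : ℝ)
        = gaussBinom q n u := MRDaux.card_subspaces_real q n u hq hq2 hun
    have hZu : (Nat.card {z : Fin (u - (n-k)) → F // LinearIndependent Fq z} : ℝ)
        = Aq q m (u - (n - k)) :=
      MRDaux.card_indep_real q m (u - (n-k)) hq (by omega) hm (by omega)
    have hEreal : (Nat.card E : ℝ) ≤ ∑ i ∈ Finset.range (t+1), gaussBinom q n i * Aq q m i := by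
      have h1 : Nat.card E ≤ ∑ i : Fin (t+1), Nat.card {x : Fin n → F // rk Fq x = i.1} := by
        rw [hEdecomp]; exact Finset.sum_le_sum (fun i _ => hEfib i)
      have h2 : (Nat.card E : ℝ)
          ≤ ∑ i : Fin (t+1), (Nat.card {x : Fin n → F // rk Fq x = i.1} : ℝ) := by
        exact_mod_cast h1
      refine le_trans h2 ?_
      rw [← Fin.sum_univ_eq_sum_range (fun i => gaussBinom q n i * Aq q m i) (t+1)]
      apply Finset.sum_le_sum
      intro i _
      have hin : i.1 ≤ n := by have := i.2; omega
      calc (Nat.card {x : Fin n → F // rk Fq x = i.1} : ℝ)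
          ≤ ((Nat.card {K : Submodule Fq (Fin n → Fq) // Module.finrank Fq K = n - i.1}
              * Nat.card {z : Fin i.1 → F // LinearIndependent Fq z} : ℕ) : ℝ) := by
            exact_mod_cast hlevel i.1 hin
        _ = gaussBinom q n i.1 * Aq q m i.1 := by
            push_cast
            rw [MRDaux.card_subspaces_real q n i.1 hq hq2 hin,
              MRDaux.card_indep_real q m i.1 hq (by omega) hm (by omega)]
    -- assemble
    rw [hcongr]
    calc (Nat.card {x : Fin n → F // (∃ c ∈ C, rk Fq (x - c) ≤ t) ∧ rk Fq x = u} : ℝ)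
        ≤ ((Nat.card E
            * Nat.card {K : Submodule Fq (Fin n → Fq) // Module.finrank Fq K = n - u}
            * Nat.card {z : Fin (u - (n-k)) → F // LinearIndependent Fq z} : ℕ) : ℝ) := by
          exact_mod_cast hmain
      _ = (Nat.card E : ℝ)
            * (Nat.card {K : Submodule Fq (Fin n → Fq) // Module.finrank Fq K = n - u} : ℝ)
            * (Nat.card {z : Fin (u - (n-k)) → F // LinearIndependent Fq z} : ℝ) := by
          push_cast; ring
      _ ≤ (∑ i ∈ Finset.range (t+1), gaussBinom q n i * Aq q m i)
            * (Nat.card {K : Submodule Fq (Fin n → Fq) // Module.finrank Fq K = n - u} : ℝ)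
            * (Nat.card {z : Fin (u - (n-k)) → F // LinearIndependent Fq z} : ℝ) := by
          apply mul_le_mul_of_nonneg_right (mul_le_mul_of_nonneg_right hEreal (Nat.cast_nonneg _))
            (Nat.cast_nonneg _)
      _ = gaussBinom q n u * Aq q m (u - (n - k))
            * (∑ i ∈ Finset.range (t+1), gaussBinom q n i * Aq q m i) := by
          rw [hSu, hZu]; ring
  · -- degenerate case u > n : the set is empty and the RHS is zero
    have hempty : IsEmpty {x : Fin n → F // rk Fq x = u ∧ ∃ c ∈ C, rk Fq (x - c) ≤ t} := by
      refine ⟨fun x => ?_⟩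
      have h1 := x.2.1
      have h2 := MRDaux.rk_le_n (Fq := Fq) x.1
      omega
    rw [Nat.card_of_isEmpty]
    have hAzero : Aq q n u = 0 :=
      Finset.prod_eq_zero (Finset.mem_range.mpr (by omega)) (sub_self _)
    have hg0 : gaussBinom q n u = 0 := by
      simp only [gaussBinom, hAzero, zero_div]
    rw [hg0]
    simp
end
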